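/- Uniform bound and convergence for the remainder terms (Lemma 3.3). Let η := max_{i ∈ 𝕏} f_i''(1)/f_i'(1)², which is finite. Then: (i) for every n ≥ 2, every i_1, …, i_n ∈ 𝕏 and every s ∈ [0,1), 0 ≤ g_{i_1}(f_{i_2} ∘ ⋯ ∘ f_{i_n}(s)) ≤ η; (ii) for every sequence (i_n)_{n≥1} in 𝕏, every s ∈ [0,1) and every k ≥ 1, the limit lim_{n→∞} g_{i_k}(f_{i_{k+1}} ∘ ⋯ ∘ f_{i_n}(s)) exists and belongs to [0, η]. -/

import Mathlib

/- STATEMENT 7: Uniform bound and convergence for the remainder terms (Lemma 3.3).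
𝕏 is a finite nonempty set; for each i ∈ 𝕏, ξ_i is an ℕ-valued random variable
(represented by its pmf `μ i`) with 0 < 𝔼(ξ_i) and 𝔼(ξ_i²) < ∞; f_i is its
probability generating function, f_i'(1) = 𝔼ξ_i, f_i''(1) = 𝔼(ξ_i(ξ_i−1)),
g_i(t) = 1/(1 − f_i(t)) − 1/(f_i'(1)(1 − t)).
Let η := max_i f_i''(1)/f_i'(1)². Then
(i) for every n ≥ 2, i_1,…,i_n ∈ 𝕏, s ∈ [0,1): 0 ≤ g_{i_1}(f_{i_2}∘⋯∘f_{i_n}(s)) ≤ η;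
(ii) for every sequence (i_n), s ∈ [0,1), k ≥ 1, the limit
  lim_n g_{i_k}(f_{i_{k+1}}∘⋯∘f_{i_n}(s)) exists and lies in [0,η]. -/

open Filter Topology

namespace Stmt7

/-- probability generating function of the pmf `μ i`. -/
noncomputable def pgf {𝕏 : Type*} (μ : 𝕏 → ℕ → ℝ) (i : 𝕏) (s : ℝ) : ℝ :=
  ∑' m : ℕ, μ i m * s ^ m

/-- mean of the pmf `μ i`, i.e. f_i'(1). -/
noncomputable def offMean {𝕏 : Type*} (μ : 𝕏 → ℕ → ℝ) (i : 𝕏) : ℝ :=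
  ∑' m : ℕ, (m : ℝ) * μ i m

/-- second factorial moment of the pmf `μ i`, i.e. f_i''(1) = 𝔼(ξ_i(ξ_i − 1)). -/
noncomputable def facMom2 {𝕏 : Type*} (μ : 𝕏 → ℕ → ℝ) (i : 𝕏) : ℝ :=
  ∑' m : ℕ, (m : ℝ) * ((m : ℝ) - 1) * μ i m

/-- g_i(t) = 1/(1 − f_i(t)) − 1/(f_i'(1)(1 − t)). -/
noncomputable def gfun {𝕏 : Type*} (μ : 𝕏 → ℕ → ℝ) (i : 𝕏) (t : ℝ) : ℝ :=
  1 / (1 - pgf μ i t) - 1 / (offMean μ i * (1 - t))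

/-- composition f_{x a} ∘ f_{x (a+1)} ∘ ⋯ ∘ f_{x b} applied to s
(the identity when a > b). -/
noncomputable def compo {𝕏 : Type*} (μ : 𝕏 → ℕ → ℝ) (x : ℕ → 𝕏) (a b : ℕ) (s : ℝ) : ℝ :=
  (List.range' a (b + 1 - a)).foldr (fun k t => pgf μ (x k) t) s

/-- η = max_{i ∈ 𝕏} f_i''(1)/f_i'(1)². -/
noncomputable def eta {𝕏 : Type*} [Fintype 𝕏] [Nonempty 𝕏] (μ : 𝕏 → ℕ → ℝ) : ℝ :=
  ⨆ i : 𝕏, facMom2 μ i / (offMean μ i) ^ 2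


-- ===== auxiliary development =====
open Finset

set_option maxHeartbeats 1000000


/-- geometric partial sum `1 + t + ... + t^(m-1)` -/
noncomputable def gS (t : ℝ) (m : ℕ) : ℝ := ∑ j ∈ Finset.range m, t ^ j

/-- `∑_{j<m} gS t j` -/
noncomputable def aS (t : ℝ) (m : ℕ) : ℝ := ∑ j ∈ Finset.range m, gS t j

section OneDist

variable {p : ℕ → ℝ}

structure Good (p : ℕ → ℝ) : Prop where
  nn : ∀ m, 0 ≤ p m
  total : ∑' m : ℕ, p m = 1
  sm : Summable fun m : ℕ => (m : ℝ) * p m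
  ssq : Summable fun m : ℕ => (m : ℝ) ^ 2 * p m
  mpos : 0 < ∑' m : ℕ, (m : ℝ) * p m

noncomputable def pg (p : ℕ → ℝ) (t : ℝ) : ℝ := ∑' m : ℕ, p m * t ^ m
noncomputable def mean (p : ℕ → ℝ) : ℝ := ∑' m : ℕ, (m : ℝ) * p m
noncomputable def fm2 (p : ℕ → ℝ) : ℝ := ∑' m : ℕ, (m : ℝ) * ((m : ℝ) - 1) * p m
noncomputable def hf (p : ℕ → ℝ) (t : ℝ) : ℝ := ∑' m : ℕ, p m * gS t m
noncomputable def af (p : ℕ → ℝ) (t : ℝ) : ℝ := ∑' m : ℕ, p m * aS t m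

lemma Good.summable (h : Good p) : Summable p := by
  by_contra hs
  have := tsum_eq_zero_of_not_summable hs
  rw [h.total] at this; norm_num at this

-- basic bounds on gS, aS for t ∈ [0,1]
lemma gS_nonneg {t : ℝ} (ht : 0 ≤ t) (m : ℕ) : 0 ≤ gS t m :=
  Finset.sum_nonneg fun j _ => pow_nonneg ht j

lemma gS_le {t : ℝ} (ht : 0 ≤ t) (ht1 : t ≤ 1) (m : ℕ) : gS t m ≤ m := by
  have : gS t m ≤ ∑ _j ∈ Finset.range m, (1 : ℝ) :=
    Finset.sum_le_sum fun j _ => pow_le_one₀ ht ht1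
  simpa using this

lemma gS_mono_m {t : ℝ} (ht : 0 ≤ t) : Monotone (gS t) := by
  intro a b hab
  exact Finset.sum_le_sum_of_subset_of_nonneg (Finset.range_subset_range.2 hab)
    (fun j _ _ => pow_nonneg ht j)

lemma one_le_gS {t : ℝ} (ht : 0 ≤ t) {m : ℕ} (hm : 1 ≤ m) : 1 ≤ gS t m := by
  have : gS t 1 ≤ gS t m := gS_mono_m ht hm
  simpa [gS] using this

lemma mul_pow_le_gS {t : ℝ} (ht : 0 ≤ t) (ht1 : t ≤ 1) (m : ℕ) :
    (m : ℝ) * t ^ m ≤ gS t m := by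
  have : ∑ _j ∈ Finset.range m, t ^ m ≤ gS t m :=
    Finset.sum_le_sum fun j hj => pow_le_pow_of_le_one ht ht1 (le_of_lt (Finset.mem_range.1 hj))
  simpa [mul_comm] using this

lemma aS_nonneg {t : ℝ} (ht : 0 ≤ t) (m : ℕ) : 0 ≤ aS t m :=
  Finset.sum_nonneg fun j _ => gS_nonneg ht j

lemma aS_le {t : ℝ} (ht : 0 ≤ t) (ht1 : t ≤ 1) (m : ℕ) : aS t m ≤ (m : ℝ) ^ 2 := by
  have : aS t m ≤ ∑ _j ∈ Finset.range m, (m : ℝ) := by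
    refine Finset.sum_le_sum fun j hj => ?_
    exact le_trans (gS_le ht ht1 j) (by exact_mod_cast (Finset.mem_range.1 hj).le)
  calc aS t m ≤ (m : ℝ) * m := by simpa using this
  _ = (m:ℝ)^2 := by ring

-- identities
lemma one_sub_pow_eq {t : ℝ} (m : ℕ) : 1 - t ^ m = (1 - t) * gS t m := by
  have := geom_sum_mul t m
  have h2 : (gS t m) * (t - 1) = t ^ m - 1 := by simpa [gS] using this
  nlinarith [h2]

lemma sub_gS_eq {t : ℝ} (m : ℕ) : (m : ℝ) - gS t m = (1 - t) * aS t m := by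
  induction m with
  | zero => simp [gS, aS]
  | succ n ih =>
    have h1 : gS t (n+1) = gS t n + t ^ n := by simp [gS, Finset.sum_range_succ]
    have h2 : aS t (n+1) = aS t n + gS t n := by simp [aS, Finset.sum_range_succ]
    have h3 := one_sub_pow_eq (t := t) n
    push_cast
    rw [h1, h2]
    nlinarith [ih, h3]

-- summability lemmas
lemma Good.p_le_one (h : Good p) (m : ℕ) : p m ≤ 1 := by
  have := Summable.le_tsum h.summable m (fun n _ => h.nn n)
  rwa [h.total] at this

lemma Good.summable_pow (h : Good p) {t : ℝ} (ht : 0 ≤ t) (ht1 : t ≤ 1) :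
    Summable fun m : ℕ => p m * t ^ m := by
  refine Summable.of_nonneg_of_le
    (fun m => mul_nonneg (h.nn m) (pow_nonneg ht m)) (fun m => ?_) h.summable
  calc p m * t ^ m ≤ p m * 1 := by
        exact mul_le_mul_of_nonneg_left (pow_le_one₀ ht ht1) (h.nn m)
  _ = p m := by ring

lemma Good.summable_hf (h : Good p) {t : ℝ} (ht : 0 ≤ t) (ht1 : t ≤ 1) :
    Summable fun m : ℕ => p m * gS t m := by
  refine Summable.of_nonneg_of_le
    (fun m => mul_nonneg (h.nn m) (gS_nonneg ht m)) (fun m => ?_) h.sm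
  calc p m * gS t m ≤ p m * m :=
        mul_le_mul_of_nonneg_left (gS_le ht ht1 m) (h.nn m)
  _ = (m : ℝ) * p m := by ring

lemma Good.summable_af (h : Good p) {t : ℝ} (ht : 0 ≤ t) (ht1 : t ≤ 1) :
    Summable fun m : ℕ => p m * aS t m := by
  refine Summable.of_nonneg_of_le
    (fun m => mul_nonneg (h.nn m) (aS_nonneg ht m)) (fun m => ?_) h.ssq
  calc p m * aS t m ≤ p m * (m : ℝ) ^ 2 :=
        mul_le_mul_of_nonneg_left (aS_le ht ht1 m) (h.nn m)
  _ = (m : ℝ) ^ 2 * p m := by ring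

lemma Good.summable_fm2 (h : Good p) :
    Summable fun m : ℕ => (m : ℝ) * ((m : ℝ) - 1) * p m := by
  have : (fun m : ℕ => (m : ℝ) * ((m : ℝ) - 1) * p m)
      = fun m : ℕ => (m : ℝ) ^ 2 * p m - (m : ℝ) * p m := by
    funext m; ring
  rw [this]; exact h.ssq.sub h.sm

lemma Good.fm2_nonneg (h : Good p) : 0 ≤ fm2 p := by
  refine tsum_nonneg fun m => ?_
  rcases Nat.eq_zero_or_pos m with hm | hm
  · simp [hm]
  · have h1 : (1:ℝ) ≤ (m:ℝ) := by exact_mod_cast hm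
    have h2 := h.nn m
    have h3 : (0:ℝ) ≤ (m:ℝ) - 1 := by linarith
    have h4 : (0:ℝ) ≤ (m:ℝ) := by linarith
    positivity

-- main identities
lemma Good.one_sub_pg (h : Good p) {t : ℝ} (ht : 0 ≤ t) (ht1 : t ≤ 1) :
    1 - pg p t = (1 - t) * hf p t := by
  have h1 : 1 - pg p t = ∑' m : ℕ, (p m - p m * t ^ m) := by
    rw [Summable.tsum_sub h.summable (h.summable_pow ht ht1), h.total, pg]
  rw [h1, hf, ← tsum_mul_left]
  congr 1; funext m
  have h2 := one_sub_pow_eq (t := t) m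
  linear_combination p m * h2

lemma Good.mean_sub_hf (h : Good p) {t : ℝ} (ht : 0 ≤ t) (ht1 : t ≤ 1) :
    mean p - hf p t = (1 - t) * af p t := by
  have h1 : mean p - hf p t = ∑' m : ℕ, ((m : ℝ) * p m - p m * gS t m) := by
    rw [Summable.tsum_sub h.sm (h.summable_hf ht ht1), mean, hf]
  rw [h1, af, ← tsum_mul_left]
  congr 1; funext m
  have h2 := sub_gS_eq (t := t) m
  linear_combination p m * h2

-- positivity of hf
lemma Good.exists_pos (h : Good p) : ∃ m : ℕ, 1 ≤ m ∧ 0 < p m := by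
  by_contra hc
  push_neg at hc
  have hz : ∀ m : ℕ, (m : ℝ) * p m = 0 := by
    intro m
    rcases Nat.eq_zero_or_pos m with hm | hm
    · simp [hm]
    · have h1 := hc m hm
      have h2 := h.nn m
      have : p m = 0 := le_antisymm h1 h2
      simp [this]
  have hz2 : mean p = 0 := by simp [mean, hz]
  have h2 : (0:ℝ) < mean p := h.mpos
  linarith

lemma Good.hf_pos (h : Good p) {t : ℝ} (ht : 0 ≤ t) (ht1 : t ≤ 1) : 0 < hf p t := by
  obtain ⟨m₀, hm₀, hp₀⟩ := h.exists_pos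
  have hsum := h.summable_hf ht ht1
  have hle : p m₀ * gS t m₀ ≤ hf p t :=
    Summable.le_tsum hsum m₀ (fun n _ => mul_nonneg (h.nn n) (gS_nonneg ht n))
  have : (1:ℝ) * p m₀ ≤ p m₀ * gS t m₀ := by
    rw [one_mul]
    nth_rewrite 1 [← mul_one (p m₀)]
    exact mul_le_mul_of_nonneg_left (one_le_gS ht hm₀) hp₀.le
  linarith

lemma Good.pg_nonneg (h : Good p) {t : ℝ} (ht : 0 ≤ t) : 0 ≤ pg p t :=
  tsum_nonneg fun m => mul_nonneg (h.nn m) (pow_nonneg ht m)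

lemma Good.pg_lt_one (h : Good p) {t : ℝ} (ht : 0 ≤ t) (ht1 : t < 1) : pg p t < 1 := by
  have h1 := h.one_sub_pg ht ht1.le
  have h2 := h.hf_pos (t := t) ht ht1.le
  nlinarith

lemma Good.pg_le_one (h : Good p) {t : ℝ} (ht : 0 ≤ t) (ht1 : t ≤ 1) : pg p t ≤ 1 := by
  have h1 := h.one_sub_pg ht ht1
  have h2 := h.hf_pos (t := t) ht ht1
  nlinarith

lemma Good.mean_pos (h : Good p) : 0 < mean p := h.mpos

-- pairwise combinatorial inequality
lemma aS_le_pred {t : ℝ} (ht : 0 ≤ t) (m : ℕ) : aS t m ≤ ((m:ℝ) - 1) * gS t m := by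
  induction m with
  | zero => simp [aS, gS]
  | succ n ih =>
    have h1 : aS t (n+1) = aS t n + gS t n := by simp [aS, Finset.sum_range_succ]
    have h2 : gS t n ≤ gS t (n+1) := gS_mono_m ht (Nat.le_succ n)
    have h3 : (0:ℝ) ≤ n := Nat.cast_nonneg n
    have h4 := gS_nonneg ht n
    push_cast
    nlinarith [ih]

lemma cross_gS {t : ℝ} (ht : 0 ≤ t) (ht1 : t ≤ 1) {n m : ℕ} (hnm : n ≤ m) :
    (n:ℝ) * gS t m ≤ (m:ℝ) * gS t n := by
  have hdiff : gS t m - gS t n = ∑ j ∈ Finset.Ico n m, t ^ j :=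
    (Finset.sum_Ico_eq_sub _ hnm).symm
  have hbd : gS t m - gS t n ≤ ((m:ℝ) - n) * t ^ n := by
    rw [hdiff]
    have : ∑ j ∈ Finset.Ico n m, t ^ j ≤ ∑ _j ∈ Finset.Ico n m, t ^ n := by
      refine Finset.sum_le_sum fun j hj => ?_
      exact pow_le_pow_of_le_one ht ht1 (Finset.mem_Ico.1 hj).1
    simpa [Nat.cast_sub hnm] using this
  have hnt : (n:ℝ) * t ^ n ≤ gS t n := mul_pow_le_gS ht ht1 n
  have hcast : (n:ℝ) ≤ (m:ℝ) := by exact_mod_cast hnm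
  have h0 : (0:ℝ) ≤ n := Nat.cast_nonneg n
  have h1 : (0:ℝ) ≤ t ^ n := pow_nonneg ht n
  nlinarith

lemma pair_ineq {t : ℝ} (ht : 0 ≤ t) (ht1 : t ≤ 1) (m n : ℕ) :
    aS t m * n + aS t n * m ≤
      (m:ℝ) * ((m:ℝ)-1) * gS t n + (n:ℝ) * ((n:ℝ)-1) * gS t m := by
  -- symmetric: wlog n ≤ m
  rcases le_total n m with hnm | hnm
  · have hr := cross_gS ht ht1 hnm
    have h1 := aS_le_pred ht m
    have h2 := aS_le_pred ht n
    have hcast : (n:ℝ) ≤ (m:ℝ) := by exact_mod_cast hnm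
    have hn0 : (0:ℝ) ≤ n := Nat.cast_nonneg n
    have hm0 : (0:ℝ) ≤ m := Nat.cast_nonneg m
    have hgm := gS_nonneg ht m
    have hgn := gS_nonneg ht n
    -- aS m * n + aS n * m ≤ (m-1) gS m n + (n-1) gS n m ≤ m(m-1) gS n + n(n-1) gS m
    have key : ((m:ℝ)-1) * gS t m * n + ((n:ℝ)-1) * gS t n * m ≤
        (m:ℝ) * ((m:ℝ)-1) * gS t n + (n:ℝ) * ((n:ℝ)-1) * gS t m := by
      nlinarith [mul_nonneg (sub_nonneg.2 hcast) (sub_nonneg.2 hr)]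
    nlinarith
  · have hr := cross_gS ht ht1 hnm
    have h1 := aS_le_pred ht m
    have h2 := aS_le_pred ht n
    have hcast : (m:ℝ) ≤ (n:ℝ) := by exact_mod_cast hnm
    have hn0 : (0:ℝ) ≤ n := Nat.cast_nonneg n
    have hm0 : (0:ℝ) ≤ m := Nat.cast_nonneg m
    have hgm := gS_nonneg ht m
    have hgn := gS_nonneg ht n
    have key : ((m:ℝ)-1) * gS t m * n + ((n:ℝ)-1) * gS t n * m ≤
        (m:ℝ) * ((m:ℝ)-1) * gS t n + (n:ℝ) * ((n:ℝ)-1) * gS t m := by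
      nlinarith [mul_nonneg (sub_nonneg.2 hcast) (sub_nonneg.2 hr)]
    nlinarith

-- product tsum lemma
lemma tsum_prod_mul {f g : ℕ → ℝ} (hf0 : ∀ m, 0 ≤ f m) (hg0 : ∀ m, 0 ≤ g m)
    (hf : Summable f) (hg : Summable g) :
    Summable (fun q : ℕ × ℕ => f q.1 * g q.2) ∧
      ∑' q : ℕ × ℕ, f q.1 * g q.2 = (∑' m, f m) * (∑' m, g m) := by
  have hs : Summable (fun q : ℕ × ℕ => f q.1 * g q.2) := by
    refine (summable_prod_of_nonneg ?_).2 ⟨fun m => hg.mul_left (f m), ?_⟩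
    · intro q; exact mul_nonneg (hf0 q.1) (hg0 q.2)
    · simpa [tsum_mul_left] using hf.mul_right (∑' m, g m)
  refine ⟨hs, ?_⟩
  rw [Summable.tsum_prod' hs (fun m => hg.mul_left (f m))]
  simp_rw [tsum_mul_left]
  rw [tsum_mul_right]

lemma Good.key_ineq (h : Good p) {t : ℝ} (ht : 0 ≤ t) (ht1 : t ≤ 1) :
    af p t * mean p ≤ fm2 p * hf p t := by
  set A : ℕ → ℝ := fun m => p m * aS t m with hA
  set C : ℕ → ℝ := fun m => (m:ℝ) * p m with hC
  set B : ℕ → ℝ := fun m => (m:ℝ) * ((m:ℝ)-1) * p m with hB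
  set D : ℕ → ℝ := fun m => p m * gS t m with hD
  have hA0 : ∀ m, 0 ≤ A m := fun m => mul_nonneg (h.nn m) (aS_nonneg ht m)
  have hC0 : ∀ m, 0 ≤ C m := fun m => mul_nonneg (Nat.cast_nonneg m) (h.nn m)
  have hB0 : ∀ m, 0 ≤ B m := by
    intro m
    rcases Nat.eq_zero_or_pos m with hm | hm
    · simp [hB, hm]
    · have h1 : (1:ℝ) ≤ (m:ℝ) := by exact_mod_cast hm
      have h2 := h.nn m
      have h3 : (0:ℝ) ≤ (m:ℝ) - 1 := by linarith
      have h4 : (0:ℝ) ≤ (m:ℝ) := by linarith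
      positivity
  have hD0 : ∀ m, 0 ≤ D m := fun m => mul_nonneg (h.nn m) (gS_nonneg ht m)
  have hAs : Summable A := h.summable_af ht ht1
  have hCs : Summable C := h.sm
  have hBs : Summable B := h.summable_fm2
  have hDs : Summable D := h.summable_hf ht ht1
  obtain ⟨hACs, hAC⟩ := tsum_prod_mul hA0 hC0 hAs hCs
  obtain ⟨hCAs, hCA⟩ := tsum_prod_mul hC0 hA0 hCs hAs
  obtain ⟨hBDs, hBD⟩ := tsum_prod_mul hB0 hD0 hBs hDs
  obtain ⟨hDBs, hDB⟩ := tsum_prod_mul hD0 hB0 hDs hBs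
  have pairwise : ∀ q : ℕ × ℕ,
      A q.1 * C q.2 + C q.1 * A q.2 ≤ B q.1 * D q.2 + D q.1 * B q.2 := by
    rintro ⟨m, n⟩
    have hp := pair_ineq ht ht1 m n
    have hmn : (0:ℝ) ≤ p m * p n := mul_nonneg (h.nn m) (h.nn n)
    simp only [hA, hC, hB, hD]
    calc p m * aS t m * ((n:ℝ) * p n) + (m:ℝ) * p m * (p n * aS t n)
        = (p m * p n) * (aS t m * n + aS t n * m) := by ring
      _ ≤ (p m * p n) * ((m:ℝ) * ((m:ℝ)-1) * gS t n + (n:ℝ) * ((n:ℝ)-1) * gS t m) :=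
          mul_le_mul_of_nonneg_left hp hmn
      _ = (m:ℝ) * ((m:ℝ)-1) * p m * (p n * gS t n) + p m * gS t m * ((n:ℝ) * ((n:ℝ)-1) * p n) := by
          ring
  have hsumle : ∑' q : ℕ × ℕ, (A q.1 * C q.2 + C q.1 * A q.2) ≤
      ∑' q : ℕ × ℕ, (B q.1 * D q.2 + D q.1 * B q.2) :=
    Summable.tsum_le_tsum pairwise (hACs.add hCAs) (hBDs.add hDBs)
  rw [Summable.tsum_add hACs hCAs, Summable.tsum_add hBDs hDBs, hAC, hCA, hBD, hDB] at hsumle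
  have hAt : ∑' m, A m = af p t := rfl
  have hCt : ∑' m, C m = mean p := rfl
  have hBt : ∑' m, B m = fm2 p := rfl
  have hDt : ∑' m, D m = hf p t := rfl
  rw [hAt, hCt, hBt, hDt] at hsumle
  nlinarith [hsumle]

-- the g function at the abstract level
noncomputable def gf (p : ℕ → ℝ) (t : ℝ) : ℝ :=
  1 / (1 - pg p t) - 1 / (mean p * (1 - t))

lemma Good.gf_eq (h : Good p) {t : ℝ} (ht : 0 ≤ t) (ht1 : t < 1) :
    gf p t = af p t / (hf p t * mean p) := by
  have h1 : 1 - pg p t = (1 - t) * hf p t := h.one_sub_pg ht ht1.le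
  have h2 : mean p - hf p t = (1 - t) * af p t := h.mean_sub_hf ht ht1.le
  have hhf := h.hf_pos ht ht1.le
  have hm := h.mpos
  have htt : (0:ℝ) < 1 - t := by linarith
  rw [gf, h1]
  rw [div_sub_div _ _ (by positivity) (by positivity)]
  rw [div_eq_div_iff (by positivity) (by positivity)]
  linear_combination ((1 - t) * hf p t * mean p) * h2

lemma Good.gf_nonneg (h : Good p) {t : ℝ} (ht : 0 ≤ t) (ht1 : t < 1) : 0 ≤ gf p t := by
  rw [h.gf_eq ht ht1]
  have h1 := h.hf_pos ht ht1.le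
  have h2 := h.mpos
  have h3 : 0 ≤ af p t := tsum_nonneg fun m => mul_nonneg (h.nn m) (aS_nonneg ht m)
  positivity

lemma Good.af_nonneg (h : Good p) {t : ℝ} (ht : 0 ≤ t) : 0 ≤ af p t :=
  tsum_nonneg fun m => mul_nonneg (h.nn m) (aS_nonneg ht m)

lemma Good.gf_le (h : Good p) {t : ℝ} (ht : 0 ≤ t) (ht1 : t < 1) :
    gf p t ≤ fm2 p / (mean p) ^ 2 := by
  rw [h.gf_eq ht ht1]
  have h1 := h.hf_pos ht ht1.le
  have h2 : 0 < mean p := h.mpos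
  have hk := h.key_ineq ht ht1.le
  rw [div_le_div_iff₀ (by positivity) (by positivity)]
  nlinarith [mul_le_mul_of_nonneg_right hk h2.le]

end OneDist

section Mu

variable {𝕏 : Type*} {μ : 𝕏 → ℕ → ℝ}

lemma pgf_eq_pg (i : 𝕏) (t : ℝ) : pgf μ i t = pg (μ i) t := rfl
lemma offMean_eq_mean (i : 𝕏) : offMean μ i = mean (μ i) := rfl
lemma facMom2_eq_fm2 (i : 𝕏) : facMom2 μ i = fm2 (μ i) := rfl
lemma gfun_eq_gf (i : 𝕏) (t : ℝ) : gfun μ i t = gf (μ i) t := rfl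

variable (hG : ∀ i, Good (μ i))
include hG

-- foldr stays in [0,1)
lemma foldr_mem (x : ℕ → 𝕏) (l : List ℕ) {s : ℝ} (hs : 0 ≤ s ∧ s < 1) :
    0 ≤ l.foldr (fun k t => pgf μ (x k) t) s ∧
      l.foldr (fun k t => pgf μ (x k) t) s < 1 := by
  induction l with
  | nil => exact hs
  | cons c l ih =>
    simp only [List.foldr_cons]
    exact ⟨(hG (x c)).pg_nonneg ih.1, (hG (x c)).pg_lt_one ih.1 ih.2⟩

lemma compo_mem (x : ℕ → 𝕏) (a b : ℕ) {s : ℝ} (hs0 : 0 ≤ s) (hs1 : s < 1) :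
    0 ≤ compo μ x a b s ∧ compo μ x a b s < 1 :=
  foldr_mem hG x _ ⟨hs0, hs1⟩

lemma gfun_mem_Icc (i : 𝕏) {t : ℝ} (ht : 0 ≤ t) (ht1 : t < 1) :
    gfun μ i t ∈ Set.Icc 0 (facMom2 μ i / (offMean μ i) ^ 2) := by
  rw [gfun_eq_gf, facMom2_eq_fm2, offMean_eq_mean]
  exact ⟨(hG i).gf_nonneg ht ht1, (hG i).gf_le ht ht1⟩

end Mu

section Eta

variable {𝕏 : Type*} [Fintype 𝕏] [Nonempty 𝕏] {μ : 𝕏 → ℕ → ℝ}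

lemma ratio_le_eta (i : 𝕏) : facMom2 μ i / (offMean μ i) ^ 2 ≤ eta μ :=
  le_ciSup (f := fun j : 𝕏 => facMom2 μ j / (offMean μ j) ^ 2)
    ((Set.finite_range _).bddAbove) i

lemma eta_nonneg (hG : ∀ i, Good (μ i)) : 0 ≤ eta μ := by
  obtain ⟨i⟩ := (inferInstance : Nonempty 𝕏)
  refine le_trans ?_ (ratio_le_eta i)
  have h1 := (hG i).fm2_nonneg
  rw [facMom2_eq_fm2, offMean_eq_mean]
  positivity

lemma gfun_mem_Icc_eta (hG : ∀ i, Good (μ i)) (i : 𝕏) {t : ℝ} (ht : 0 ≤ t) (ht1 : t < 1) :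
    gfun μ i t ∈ Set.Icc 0 (eta μ) := by
  obtain ⟨h1, h2⟩ := gfun_mem_Icc hG i ht ht1
  exact ⟨h1, le_trans h2 (ratio_le_eta i)⟩

end Eta

/-! ### Convolution powers -/

section Conv

noncomputable def conv (f g : ℕ → ℝ) (w : ℕ) : ℝ :=
  ∑ kl ∈ Finset.HasAntidiagonal.antidiagonal w, f kl.1 * g kl.2

noncomputable def convPow (p : ℕ → ℝ) : ℕ → ℕ → ℝ
  | 0 => fun w => if w = 0 then 1 else 0
  | v + 1 => conv (convPow p v) p

structure Dist (p : ℕ → ℝ) : Prop where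
  nn : ∀ m, 0 ≤ p m
  total : ∑' m : ℕ, p m = 1

variable {p : ℕ → ℝ}

lemma Dist.summable (h : Dist p) : Summable p := by
  by_contra hs
  have := tsum_eq_zero_of_not_summable hs
  rw [h.total] at this; norm_num at this

lemma Good.dist (h : Good p) : Dist p := ⟨h.nn, h.total⟩

lemma Dist.summable_pow (h : Dist p) {t : ℝ} (ht : 0 ≤ t) (ht1 : t ≤ 1) :
    Summable fun m : ℕ => p m * t ^ m := by
  refine Summable.of_nonneg_of_le
    (fun m => mul_nonneg (h.nn m) (pow_nonneg ht m)) (fun m => ?_) h.summable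
  calc p m * t ^ m ≤ p m * 1 :=
        mul_le_mul_of_nonneg_left (pow_le_one₀ ht ht1) (h.nn m)
  _ = p m := by ring

lemma Dist.pg_one (h : Dist p) : pg p 1 = 1 := by
  rw [pg]; simpa using h.total

lemma conv_nonneg' {f g : ℕ → ℝ} (hf : ∀ m, 0 ≤ f m) (hg : ∀ m, 0 ≤ g m) (w : ℕ) :
    0 ≤ conv f g w :=
  Finset.sum_nonneg fun kl _ => mul_nonneg (hf kl.1) (hg kl.2)

/-- Cauchy product for nonnegative coefficient series. -/
lemma conv_pgf {f g : ℕ → ℝ} {t : ℝ} (ht : 0 ≤ t)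
    (hf0 : ∀ m, 0 ≤ f m) (hg0 : ∀ m, 0 ≤ g m)
    (hf : Summable fun w => f w * t ^ w) (hg : Summable fun w => g w * t ^ w) :
    Summable (fun w => conv f g w * t ^ w) ∧
      ∑' w : ℕ, conv f g w * t ^ w =
        (∑' w : ℕ, f w * t ^ w) * (∑' w : ℕ, g w * t ^ w) := by
  set F : ℕ → ℝ := fun w => f w * t ^ w with hF
  set G : ℕ → ℝ := fun w => g w * t ^ w with hG
  have hFn : Summable fun w => ‖F w‖ := by
    refine hf.congr fun w => ?_
    rw [Real.norm_eq_abs, abs_of_nonneg (mul_nonneg (hf0 w) (pow_nonneg ht w))]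
  have hGn : Summable fun w => ‖G w‖ := by
    refine hg.congr fun w => ?_
    rw [Real.norm_eq_abs, abs_of_nonneg (mul_nonneg (hg0 w) (pow_nonneg ht w))]
  have hkey : ∀ w : ℕ, conv f g w * t ^ w =
      ∑ kl ∈ Finset.HasAntidiagonal.antidiagonal w, F kl.1 * G kl.2 := by
    intro w
    rw [conv, Finset.sum_mul]
    refine Finset.sum_congr rfl fun kl hkl => ?_
    have hw : kl.1 + kl.2 = w := Finset.HasAntidiagonal.mem_antidiagonal.1 hkl
    simp only [hF, hG]
    rw [← hw, pow_add]; ring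
  constructor
  · refine Summable.congr ?_ fun w => (hkey w).symm
    exact summable_sum_mul_antidiagonal_of_summable_mul
      (summable_mul_of_summable_norm hFn hGn)
  · calc ∑' w : ℕ, conv f g w * t ^ w
        = ∑' w : ℕ, ∑ kl ∈ Finset.HasAntidiagonal.antidiagonal w, F kl.1 * G kl.2 := by
          exact tsum_congr hkey
    _ = (∑' w, F w) * (∑' w, G w) :=
        (tsum_mul_tsum_eq_tsum_sum_antidiagonal_of_summable_norm hFn hGn).symm

lemma convPow_nonneg (hp : ∀ m, 0 ≤ p m) : ∀ v w, 0 ≤ convPow p v w := by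
  intro v
  induction v with
  | zero => intro w; by_cases h : w = 0 <;> simp [convPow, h]
  | succ v ih => intro w; exact conv_nonneg' ih hp w

lemma convPow_pgf (h : Dist p) {t : ℝ} (ht : 0 ≤ t) (ht1 : t ≤ 1) (v : ℕ) :
    Summable (fun w => convPow p v w * t ^ w) ∧
      ∑' w : ℕ, convPow p v w * t ^ w = (pg p t) ^ v := by
  induction v with
  | zero =>
    constructor
    · apply summable_of_ne_finset_zero (s := {0})
      intro w hw
      simp only [Finset.mem_singleton] at hw
      simp [convPow, hw]
    · rw [tsum_eq_single 0 (fun w hw => by simp [convPow, hw])]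
      simp [convPow]
  | succ v ih =>
    have hc := conv_pgf ht (convPow_nonneg h.nn v) h.nn ih.1 (h.summable_pow ht ht1)
    refine ⟨hc.1, ?_⟩
    have : ∑' w : ℕ, convPow p (v+1) w * t ^ w
        = (∑' w : ℕ, convPow p v w * t ^ w) * (∑' w : ℕ, p w * t ^ w) := hc.2
    rw [this, ih.2]
    rw [pow_succ]; rfl

lemma convPow_summable (h : Dist p) (v : ℕ) : Summable (convPow p v) := by
  have := (convPow_pgf h (t := 1) zero_le_one le_rfl v).1
  simpa using this

lemma convPow_total (h : Dist p) (v : ℕ) : ∑' w : ℕ, convPow p v w = 1 := by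
  have h2 := (convPow_pgf h (t := 1) zero_le_one le_rfl v).2
  rw [h.pg_one, one_pow] at h2
  simpa using h2

lemma convPow_le_one (h : Dist p) (v w : ℕ) : convPow p v w ≤ 1 := by
  have h1 := Summable.le_tsum (convPow_summable h v) w (fun n _ => convPow_nonneg h.nn v n)
  rwa [convPow_total h v] at h1

lemma convPow_zero_eval (v : ℕ) : convPow p v 0 = (p 0) ^ v := by
  induction v with
  | zero => simp [convPow]
  | succ v ih => simp [convPow, conv, Finset.Nat.antidiagonal_zero, ih, pow_succ]

lemma convPow_eq_zero_of_lt (hp0 : p 0 = 0) : ∀ v w, w < v → convPow p v w = 0 := by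
  intro v
  induction v with
  | zero => intro w hw; omega
  | succ v ih =>
    intro w hw
    rw [convPow, conv]
    refine Finset.sum_eq_zero fun kl hkl => ?_
    have hsum : kl.1 + kl.2 = w := Finset.HasAntidiagonal.mem_antidiagonal.1 hkl
    rcases Nat.eq_zero_or_pos kl.2 with h2 | h2
    · rw [h2] at hsum ⊢; rw [hp0]; ring
    · have : kl.1 < v := by omega
      rw [ih kl.1 this]; ring

end Conv

/-! ### Partial sums of convolution powers and the crash bound -/

section SP

variable {p : ℕ → ℝ}

lemma Dist.le_one (h : Dist p) (m : ℕ) : p m ≤ 1 := by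
  have := Summable.le_tsum h.summable m (fun n _ => h.nn n)
  rwa [h.total] at this

noncomputable def SP (p : ℕ → ℝ) (v z : ℕ) : ℝ := ∑ w ∈ Finset.range (z+1), convPow p v w

lemma SP_nonneg (hp : ∀ m, 0 ≤ p m) (v z : ℕ) : 0 ≤ SP p v z :=
  Finset.sum_nonneg fun w _ => convPow_nonneg hp v w

lemma SP_le_one (h : Dist p) (v z : ℕ) : SP p v z ≤ 1 := by
  have := Summable.sum_le_tsum (Finset.range (z+1)) (fun w _ => convPow_nonneg h.nn v w)
    (convPow_summable h v)
  rwa [convPow_total h v] at this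

lemma SP_mono (hp : ∀ m, 0 ≤ p m) (v : ℕ) {z z' : ℕ} (hz : z ≤ z') :
    SP p v z ≤ SP p v z' :=
  Finset.sum_le_sum_of_subset_of_nonneg
    (Finset.range_subset_range.2 (by omega)) (fun w _ _ => convPow_nonneg hp v w)

lemma conv_eq_sum_g (f g : ℕ → ℝ) (w : ℕ) :
    conv f g w = ∑ b ∈ Finset.range (w+1), g b * f (w - b) := by
  rw [conv, Finset.Nat.sum_antidiagonal_eq_sum_range_succ (fun a b => f a * g b) w]
  rw [← Finset.sum_range_reflect]
  refine Finset.sum_congr rfl fun j hj => ?_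
  have hj' : j ≤ w := by simpa [Nat.lt_succ_iff] using Finset.mem_range.1 hj
  have h1 : w + 1 - 1 - j = w - j := by omega
  have h2 : w - (w - j) = j := by omega
  rw [h1, h2]; ring

lemma sum_range_conv (f g : ℕ → ℝ) (z : ℕ) :
    ∑ w ∈ Finset.range (z+1), conv f g w
      = ∑ b ∈ Finset.range (z+1), g b * (∑ a ∈ Finset.range (z+1-b), f a) := by
  induction z with
  | zero =>
    simp [conv_eq_sum_g f g 0]
  | succ z ih =>
    have hsplit : ∀ b ∈ Finset.range (z+2),
        g b * (∑ a ∈ Finset.range (z+2-b), f a)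
          = g b * (∑ a ∈ Finset.range (z+1-b), f a) + g b * f (z+1-b) := by
      intro b hb
      have hb' : b ≤ z + 1 := by simpa [Nat.lt_succ_iff] using Finset.mem_range.1 hb
      have h1 : z + 2 - b = (z + 1 - b) + 1 := by omega
      rw [h1, Finset.sum_range_succ]; ring
    rw [Finset.sum_range_succ, ih, conv_eq_sum_g f g (z+1),
      Finset.sum_congr rfl hsplit, Finset.sum_add_distrib,
      Finset.sum_range_succ (fun b => g b * ∑ a ∈ Finset.range (z+1-b), f a) (z+1)]
    norm_num

lemma SP_zero_z (v : ℕ) : SP p v 0 = (p 0) ^ v := by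
  simp [SP, convPow_zero_eval]

lemma partial_tail_le (h : Dist p) (z : ℕ) :
    ∑ i ∈ Finset.range (z+1), p (i+1) ≤ 1 - p 0 := by
  have h1 : ∑ w ∈ Finset.range (z+2), p w
      = (∑ i ∈ Finset.range (z+1), p (i+1)) + p 0 := Finset.sum_range_succ' p (z+1)
  have h2 : ∑ w ∈ Finset.range (z+2), p w ≤ 1 := by
    have := Summable.sum_le_tsum (Finset.range (z+2)) (fun w _ => h.nn w) h.summable
    rwa [h.total] at this
  linarith

lemma SP_rec (h : Dist p) (v z : ℕ) :
    SP p (v+1) (z+1) ≤ p 0 * SP p v (z+1) + (1 - p 0) * SP p v z := by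
  have hrw : SP p (v+1) (z+1)
      = ∑ b ∈ Finset.range (z+2), p b * (∑ a ∈ Finset.range (z+2-b), convPow p v a) := by
    rw [SP]
    exact sum_range_conv (convPow p v) p (z+1)
  rw [hrw, Finset.sum_range_succ' _ (z+1)]
  have hb0 : p 0 * (∑ a ∈ Finset.range (z+2-0), convPow p v a) = p 0 * SP p v (z+1) := by
    norm_num [SP]
  rw [hb0]
  have hbound : ∑ i ∈ Finset.range (z+1), p (i+1) * (∑ a ∈ Finset.range (z+2-(i+1)), convPow p v a)
      ≤ (1 - p 0) * SP p v z := by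
    have hle : ∀ i ∈ Finset.range (z+1),
        p (i+1) * (∑ a ∈ Finset.range (z+2-(i+1)), convPow p v a) ≤ p (i+1) * SP p v z := by
      intro i hi
      have hi' : i ≤ z := by simpa [Nat.lt_succ_iff] using Finset.mem_range.1 hi
      refine mul_le_mul_of_nonneg_left ?_ (h.nn (i+1))
      have h1 : z + 2 - (i+1) = (z - i) + 1 := by omega
      rw [h1]
      exact SP_mono h.nn v (by omega)
    calc ∑ i ∈ Finset.range (z+1), p (i+1) * (∑ a ∈ Finset.range (z+2-(i+1)), convPow p v a)
        ≤ ∑ i ∈ Finset.range (z+1), p (i+1) * SP p v z := Finset.sum_le_sum hle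
      _ = (∑ i ∈ Finset.range (z+1), p (i+1)) * SP p v z := by rw [Finset.sum_mul]
      _ ≤ (1 - p 0) * SP p v z :=
          mul_le_mul_of_nonneg_right (partial_tail_le h z) (SP_nonneg h.nn v z)
  linarith

lemma pow_succ_ineq {a : ℝ} (ha : 0 ≤ a) (z : ℕ) :
    a ^ (z+1) + (z+1 : ℝ) * a ^ z ≤ (a+1) ^ (z+1) := by
  induction z with
  | zero => norm_num
  | succ z ih =>
    have key : (a+1) * (a ^ (z+1) + ((z:ℝ)+1) * a ^ z) ≤ (a+1) * (a+1)^(z+1) :=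
      mul_le_mul_of_nonneg_left ih (by linarith)
    have e1 : (a+1)^(z+1) * (a+1) = (a+1)^(z+1+1) := (pow_succ (a+1) (z+1)).symm
    have e2 : a^(z+1) * a = a^(z+1+1) := (pow_succ a (z+1)).symm
    have e3 : a^z * a = a^(z+1) := (pow_succ a z).symm
    have h2 : (0:ℝ) ≤ a ^ z := pow_nonneg ha z
    have h4 : (0:ℝ) ≤ (z:ℝ) := Nat.cast_nonneg z
    push_cast
    nlinarith [key, mul_nonneg (mul_nonneg h4 ha) h2, e1, e2, e3]

lemma SP_crash (h : Dist p) : ∀ v z : ℕ, z ≤ v →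
    SP p v z ≤ (z+1 : ℝ) * (v:ℝ)^z * (p 0)^(v-z) := by
  have hr0 : 0 ≤ p 0 := h.nn 0
  intro v
  induction v with
  | zero =>
    intro z hz
    interval_cases z
    simp [SP_zero_z]
  | succ v ih =>
    intro z hz
    match z with
    | 0 =>
      have : SP p (v+1) 0 = p 0 ^ (v+1) := SP_zero_z (v+1)
      rw [this]
      simp
    | z'+1 =>
      rcases Nat.lt_or_ge v (z'+1) with hcase | hcase
      · -- z' = v
        have h1 : SP p (v+1) (z'+1) ≤ 1 := SP_le_one h (v+1) (z'+1)
        have hsub : (v+1) - (z'+1) = 0 := by omega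
        rw [hsub, pow_zero, mul_one]
        have hv1 : (1:ℝ) ≤ ((v+1 : ℕ):ℝ) := by exact_mod_cast Nat.succ_le_succ (Nat.zero_le v)
        have h6 : (1:ℝ) ≤ ((v+1:ℕ):ℝ)^(z'+1) := one_le_pow₀ hv1
        have h7 : (1:ℝ) ≤ ((z':ℝ)+1+1) := by
          have : (0:ℝ) ≤ (z':ℝ) := Nat.cast_nonneg z'
          linarith
        calc SP p (v+1) (z'+1) ≤ 1 := h1
          _ ≤ (((z'+1:ℕ):ℝ) + 1) * (((v+1:ℕ)):ℝ)^(z'+1) := by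
            push_cast at h6 ⊢
            nlinarith [h6, h7]
      · -- z'+1 ≤ v
        have ih1 := ih (z'+1) hcase
        have ih2 := ih z' (le_trans (Nat.le_succ z') hcase)
        have hrec := SP_rec h v z'
        have hr1 : p 0 ≤ 1 := h.le_one 0
        have hs1 : 0 ≤ SP p v (z'+1) := SP_nonneg h.nn v (z'+1)
        have hs2 : 0 ≤ SP p v z' := SP_nonneg h.nn v z'
        have hex : v - z' = (v - (z'+1)) + 1 := by omega
        have hex2 : (v+1) - (z'+1) = v - z' := by omega
        have epow : p 0 ^ (v - (z'+1)) * p 0 = p 0 ^ (v - z') := by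
          rw [hex, pow_succ]
        have hvz : (0:ℝ) ≤ (v:ℝ) := Nat.cast_nonneg v
        have hpow := pow_succ_ineq hvz z'
        have hrpow : (0:ℝ) ≤ p 0 ^ (v - z') := pow_nonneg hr0 _
        have hrpow2 : (0:ℝ) ≤ p 0 ^ (v - (z'+1)) := pow_nonneg hr0 _
        have hvp1 : (0:ℝ) ≤ (v:ℝ)^(z'+1) := pow_nonneg hvz _
        have hvp0 : (0:ℝ) ≤ (v:ℝ)^z' := pow_nonneg hvz _
        have hz0 : (0:ℝ) ≤ (z':ℝ) := Nat.cast_nonneg z'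
        rw [hex2]
        calc SP p (v+1) (z'+1) ≤ p 0 * SP p v (z'+1) + (1 - p 0) * SP p v z' := hrec
          _ ≤ p 0 * ((((z'+1:ℕ):ℝ) + 1) * (v:ℝ)^(z'+1) * p 0^(v-(z'+1)))
              + (1 - p 0) * ((((z':ℕ):ℝ) + 1) * (v:ℝ)^z' * p 0^(v-z')) := by
            exact add_le_add (mul_le_mul_of_nonneg_left ih1 hr0)
              (mul_le_mul_of_nonneg_left ih2 (by linarith))
          _ ≤ (((z'+1:ℕ):ℝ) + 1) * (((v+1:ℕ)):ℝ)^(z'+1) * p 0^(v-z') := by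
            push_cast
            set X := p 0 ^ (v - z') with hX
            have hA : p 0 * ((((z':ℝ)+1) + 1) * (v:ℝ)^(z'+1) * p 0^(v-(z'+1)))
                = (((z':ℝ)+1) + 1) * (v:ℝ)^(z'+1) * X := by
              rw [← epow]; ring
            have hGz : (0:ℝ) ≤ ((z':ℝ)+1) * (v:ℝ)^z' * X :=
              mul_nonneg (mul_nonneg (by linarith) hvp0) hrpow
            have hB : (1 - p 0) * (((z':ℝ)+1) * (v:ℝ)^z' * X) ≤ ((z':ℝ)+1) * (v:ℝ)^z' * X := by
              nlinarith [mul_nonneg hr0 hGz]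
            have hD := mul_le_mul_of_nonneg_right hpow hrpow
            have hE := mul_le_mul_of_nonneg_left hD (show (0:ℝ) ≤ (z':ℝ)+2 by linarith)
            have hF : ((z':ℝ)+1) * (v:ℝ)^z' * X ≤ ((z':ℝ)+2) * (((z':ℝ)+1) * (v:ℝ)^z' * X) := by
              nlinarith [mul_nonneg hz0 hGz]
            nlinarith [hA, hB, hE, hF]

end SP

/-! ### Evolution of a distribution by convolution powers -/

section Evolve

variable {ν p : ℕ → ℝ}

noncomputable def evolve (ν p : ℕ → ℝ) (w : ℕ) : ℝ := ∑' v : ℕ, ν v * convPow p v w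

lemma Dist.pg_nonneg' (h : Dist p) {t : ℝ} (ht : 0 ≤ t) : 0 ≤ pg p t :=
  tsum_nonneg fun m => mul_nonneg (h.nn m) (pow_nonneg ht m)

lemma Dist.pg_le_one' (h : Dist p) {t : ℝ} (ht : 0 ≤ t) (ht1 : t ≤ 1) : pg p t ≤ 1 := by
  rw [← h.total]
  refine Summable.tsum_le_tsum (fun m => ?_) (h.summable_pow ht ht1) h.summable
  calc p m * t^m ≤ p m * 1 := mul_le_mul_of_nonneg_left (pow_le_one₀ ht ht1) (h.nn m)
  _ = p m := mul_one _

lemma evolve_nonneg (hν0 : ∀ v, 0 ≤ ν v) (hp0 : ∀ m, 0 ≤ p m) (w : ℕ) :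
    0 ≤ evolve ν p w :=
  tsum_nonneg fun v => mul_nonneg (hν0 v) (convPow_nonneg hp0 v w)

lemma summable_col (hν : Dist ν) (hp : Dist p) {t : ℝ} (ht : 0 ≤ t) (ht1 : t ≤ 1) (w : ℕ) :
    Summable fun v => ν v * (convPow p v w * t ^ w) := by
  refine Summable.of_nonneg_of_le
    (fun v => mul_nonneg (hν.nn v) (mul_nonneg (convPow_nonneg hp.nn v w) (pow_nonneg ht w)))
    (fun v => ?_) hν.summable
  calc ν v * (convPow p v w * t ^ w) ≤ ν v * (1 * 1) := by
        refine mul_le_mul_of_nonneg_left ?_ (hν.nn v)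
        exact mul_le_mul (convPow_le_one hp v w) (pow_le_one₀ ht ht1)
          (pow_nonneg ht w) zero_le_one
  _ = ν v := by ring

lemma evolve_key (hν : Dist ν) (hp : Dist p) {t : ℝ} (ht : 0 ≤ t) (ht1 : t ≤ 1) :
    Summable (fun w => evolve ν p w * t ^ w) ∧
      ∑' w : ℕ, evolve ν p w * t ^ w = ∑' v : ℕ, ν v * (pg p t) ^ v := by
  set F : ℕ × ℕ → ℝ := fun q => ν q.1 * (convPow p q.1 q.2 * t ^ q.2) with hF
  have hF0 : ∀ q, 0 ≤ F q := fun q =>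
    mul_nonneg (hν.nn q.1) (mul_nonneg (convPow_nonneg hp.nn _ _) (pow_nonneg ht _))
  have hrow : ∀ v, Summable fun w => F (v, w) := fun v =>
    ((convPow_pgf hp ht ht1 v).1).mul_left (ν v)
  have hrowsum : ∀ v, ∑' w, F (v, w) = ν v * (pg p t) ^ v := by
    intro v
    simp only [hF]
    rw [tsum_mul_left, (convPow_pgf hp ht ht1 v).2]
  have hrowsum_summable : Summable fun v => ∑' w, F (v, w) := by
    refine Summable.of_nonneg_of_le
      (fun v => tsum_nonneg fun w => hF0 (v, w)) (fun v => ?_) hν.summable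
    rw [hrowsum v]
    calc ν v * (pg p t)^v ≤ ν v * 1 := mul_le_mul_of_nonneg_left
          (pow_le_one₀ (hp.pg_nonneg' ht) (hp.pg_le_one' ht ht1)) (hν.nn v)
      _ = ν v := mul_one _
  have hFs : Summable F := (summable_prod_of_nonneg hF0).2 ⟨hrow, hrowsum_summable⟩
  have htsum1 : ∑' q : ℕ × ℕ, F q = ∑' v : ℕ, ν v * (pg p t) ^ v := by
    rw [Summable.tsum_prod' hFs hrow]
    exact tsum_congr hrowsum
  -- swapped order
  have hGs : Summable (fun q : ℕ × ℕ => F (Prod.swap q)) :=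
    (Equiv.prodComm ℕ ℕ).summable_iff.2 hFs
  have hcol : ∀ w, Summable fun v => F (v, w) := fun w => summable_col hν hp ht ht1 w
  have hswap : ∑' q : ℕ × ℕ, F (Prod.swap q) = ∑' q : ℕ × ℕ, F q :=
    (Equiv.prodComm ℕ ℕ).tsum_eq F
  have htsum2 : ∑' q : ℕ × ℕ, F (Prod.swap q) = ∑' w : ℕ, evolve ν p w * t ^ w := by
    rw [Summable.tsum_prod' hGs (fun w => hcol w)]
    refine tsum_congr fun w => ?_
    have : ∀ v, F (v, w) = (ν v * convPow p v w) * t ^ w := by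
      intro v; simp only [hF]; ring
    calc ∑' v, F (Prod.swap (w, v)) = ∑' v, (ν v * convPow p v w) * t ^ w := by
          refine tsum_congr fun v => ?_
          simp only [Prod.swap_prod_mk]
          exact this v
    _ = (∑' v, ν v * convPow p v w) * t ^ w := tsum_mul_right
    _ = evolve ν p w * t ^ w := rfl
  have hsummable : Summable (fun w => evolve ν p w * t ^ w) := by
    have h1 := ((summable_prod_of_nonneg (fun q => hF0 (Prod.swap q))).1 hGs).2
    refine h1.congr fun w => ?_
    calc ∑' v, F (Prod.swap (w, v)) = ∑' v, (ν v * convPow p v w) * t ^ w := by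
          refine tsum_congr fun v => ?_
          simp only [hF, Prod.swap_prod_mk]; ring
    _ = (∑' v, ν v * convPow p v w) * t ^ w := tsum_mul_right
    _ = evolve ν p w * t ^ w := rfl
  exact ⟨hsummable, by rw [← htsum2, hswap, htsum1]⟩

lemma evolve_dist (hν : Dist ν) (hp : Dist p) : Dist (evolve ν p) := by
  refine ⟨evolve_nonneg hν.nn hp.nn, ?_⟩
  have h := (evolve_key hν hp (t := 1) zero_le_one le_rfl).2
  rw [hp.pg_one] at h
  calc ∑' w : ℕ, evolve ν p w = ∑' w : ℕ, evolve ν p w * 1 ^ w := by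
        refine tsum_congr fun w => by rw [one_pow, mul_one]
  _ = ∑' v : ℕ, ν v * 1 ^ v := h
  _ = ∑' v : ℕ, ν v := tsum_congr fun v => by rw [one_pow, mul_one]
  _ = 1 := hν.total

lemma evolve_zero_eval (hν : Dist ν) (hp : Dist p) :
    evolve ν p 0 = ∑' v : ℕ, ν v * (p 0) ^ v := by
  rw [evolve]
  exact tsum_congr fun v => by rw [convPow_zero_eval]

lemma evolve_zero_ge (hν : Dist ν) (hp : Dist p) : ν 0 ≤ evolve ν p 0 := by
  rw [evolve_zero_eval hν hp]
  have hs : Summable fun v => ν v * (p 0) ^ v := hν.summable_pow (hp.nn 0) (hp.le_one 0)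
  have := Summable.le_tsum hs 0 (fun v _ => mul_nonneg (hν.nn v) (pow_nonneg (hp.nn 0) v))
  simpa using this

end Evolve

/-! ### low-mass estimates -/

section LowMass

variable {ν p : ℕ → ℝ}

/-- mass of `{1,...,z}` -/
noncomputable def mI (ν : ℕ → ℝ) (z : ℕ) : ℝ := ∑ w ∈ Finset.Icc 1 z, ν w

lemma mI_nonneg (hν0 : ∀ v, 0 ≤ ν v) (z : ℕ) : 0 ≤ mI ν z :=
  Finset.sum_nonneg fun w _ => hν0 w

/-- exchange a finite sum over `Icc 1 z` with the tsum defining `evolve`. -/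
lemma mI_evolve_eq (hν : Dist ν) (hp : Dist p) (z : ℕ) :
    mI (evolve ν p) z = ∑' v : ℕ, ν v * (∑ w ∈ Finset.Icc 1 z, convPow p v w) := by
  rw [mI]
  have hsw : ∑ w ∈ Finset.Icc 1 z, evolve ν p w
      = ∑' v : ℕ, ∑ w ∈ Finset.Icc 1 z, ν v * convPow p v w := by
    refine (Summable.tsum_finsetSum fun w _ => ?_).symm
    refine Summable.of_nonneg_of_le
      (fun v => mul_nonneg (hν.nn v) (convPow_nonneg hp.nn v w)) (fun v => ?_) hν.summable
    calc ν v * convPow p v w ≤ ν v * 1 :=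
          mul_le_mul_of_nonneg_left (convPow_le_one hp v w) (hν.nn v)
    _ = ν v := mul_one _
  rw [hsw]
  exact tsum_congr fun v => by rw [Finset.mul_sum]

lemma SPI_le_SP (hp0 : ∀ m, 0 ≤ p m) (v z : ℕ) :
    ∑ w ∈ Finset.Icc 1 z, convPow p v w ≤ SP p v z := by
  refine Finset.sum_le_sum_of_subset_of_nonneg ?_ (fun w _ _ => convPow_nonneg hp0 v w)
  intro w hw
  simp only [Finset.mem_Icc] at hw
  simp only [Finset.mem_range]
  omega

lemma SPI_nonneg (hp0 : ∀ m, 0 ≤ p m) (v z : ℕ) :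
    0 ≤ ∑ w ∈ Finset.Icc 1 z, convPow p v w :=
  Finset.sum_nonneg fun w _ => convPow_nonneg hp0 v w

lemma SPI_le_one (hp : Dist p) (v z : ℕ) :
    ∑ w ∈ Finset.Icc 1 z, convPow p v w ≤ 1 := by
  have := Summable.sum_le_tsum (Finset.Icc 1 z) (fun w _ => convPow_nonneg hp.nn v w)
    (convPow_summable hp v)
  rwa [convPow_total hp v] at this

lemma SPI_zero_v (z : ℕ) : ∑ w ∈ Finset.Icc 1 z, convPow p 0 w = 0 := by
  refine Finset.sum_eq_zero fun w hw => ?_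
  simp only [Finset.mem_Icc] at hw
  have : w ≠ 0 := by omega
  simp [convPow, this]

/-- (E3): a step with no extinction mass does not increase the low mass. -/
lemma mI_step_noext (hν : Dist ν) (hp : Dist p) (hp0 : p 0 = 0) (z : ℕ) :
    mI (evolve ν p) z ≤ mI ν z := by
  rw [mI_evolve_eq hν hp z]
  have hterm : ∀ v : ℕ, ν v * (∑ w ∈ Finset.Icc 1 z, convPow p v w)
      ≤ (fun v => if v ∈ Finset.Icc 1 z then ν v else 0) v := by
    intro v
    by_cases hv : v ∈ Finset.Icc 1 z
    · simp only [hv, if_true]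
      calc ν v * (∑ w ∈ Finset.Icc 1 z, convPow p v w) ≤ ν v * 1 :=
            mul_le_mul_of_nonneg_left (SPI_le_one hp v z) (hν.nn v)
      _ = ν v := mul_one _
    · simp only [hv, if_false]
      rcases Nat.eq_zero_or_pos v with h0 | h0
      · rw [h0, SPI_zero_v]; simp
      · -- v > z
        have hvz : z < v := by
          simp only [Finset.mem_Icc] at hv; omega
        have : ∑ w ∈ Finset.Icc 1 z, convPow p v w = 0 := by
          refine Finset.sum_eq_zero fun w hw => ?_
          simp only [Finset.mem_Icc] at hw
          exact convPow_eq_zero_of_lt hp0 v w (by omega)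
        rw [this, mul_zero]
  have hs1 : Summable fun v => ν v * (∑ w ∈ Finset.Icc 1 z, convPow p v w) := by
    refine Summable.of_nonneg_of_le
      (fun v => mul_nonneg (hν.nn v) (SPI_nonneg hp.nn v z)) (fun v => ?_) hν.summable
    calc ν v * (∑ w ∈ Finset.Icc 1 z, convPow p v w) ≤ ν v * 1 :=
          mul_le_mul_of_nonneg_left (SPI_le_one hp v z) (hν.nn v)
    _ = ν v := mul_one _
  have hs2 : Summable fun v => if v ∈ Finset.Icc 1 z then ν v else 0 :=
    summable_of_ne_finset_zero (s := Finset.Icc 1 z) (fun v hv => by simp [hv])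
  calc ∑' v : ℕ, ν v * (∑ w ∈ Finset.Icc 1 z, convPow p v w)
      ≤ ∑' v : ℕ, (if v ∈ Finset.Icc 1 z then ν v else 0) := Summable.tsum_le_tsum hterm hs1 hs2
  _ = ∑ v ∈ Finset.Icc 1 z, (if v ∈ Finset.Icc 1 z then ν v else 0) :=
      tsum_eq_sum (fun v hv => by simp [hv])
  _ = mI ν z := Finset.sum_congr rfl fun v hv => by simp [hv]

/-- (E5): crash-split at a general step. -/
lemma mI_step_split (hν : Dist ν) (hp : Dist p) {z M : ℕ} {δ : ℝ} (hδ : 0 ≤ δ)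
    (hcrash : ∀ v : ℕ, M < v → ∑ w ∈ Finset.Icc 1 z, convPow p v w ≤ δ) :
    mI (evolve ν p) z ≤ mI ν M + δ := by
  rw [mI_evolve_eq hν hp z]
  have hterm : ∀ v : ℕ, ν v * (∑ w ∈ Finset.Icc 1 z, convPow p v w)
      ≤ (fun v => (if v ∈ Finset.Icc 1 M then ν v else 0) + δ * ν v) v := by
    intro v
    rcases Nat.eq_zero_or_pos v with h0 | h0
    · rw [h0, SPI_zero_v, mul_zero]
      have h5 : (0:ℝ) ≤ δ * ν 0 := mul_nonneg hδ (hν.nn 0)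
      have h00 : (0:ℕ) ∉ Finset.Icc 1 M := by simp
      simp only [h00, if_false, zero_add]
      exact h5
    · rcases Nat.lt_or_ge M v with hMv | hMv
      · -- crash regime
        have h1 : v ∉ Finset.Icc 1 M := by simp only [Finset.mem_Icc]; omega
        simp only [h1, if_false, zero_add]
        calc ν v * (∑ w ∈ Finset.Icc 1 z, convPow p v w) ≤ ν v * δ :=
              mul_le_mul_of_nonneg_left (hcrash v hMv) (hν.nn v)
        _ = δ * ν v := mul_comm _ _
      · have h1 : v ∈ Finset.Icc 1 M := by simp only [Finset.mem_Icc]; omega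
        simp only [h1, if_true]
        calc ν v * (∑ w ∈ Finset.Icc 1 z, convPow p v w) ≤ ν v * 1 :=
              mul_le_mul_of_nonneg_left (SPI_le_one hp v z) (hν.nn v)
        _ = ν v := mul_one _
        _ ≤ ν v + δ * ν v := by
              have := mul_nonneg hδ (hν.nn v); linarith
  have hs1 : Summable fun v => ν v * (∑ w ∈ Finset.Icc 1 z, convPow p v w) := by
    refine Summable.of_nonneg_of_le
      (fun v => mul_nonneg (hν.nn v) (SPI_nonneg hp.nn v z)) (fun v => ?_) hν.summable
    calc ν v * (∑ w ∈ Finset.Icc 1 z, convPow p v w) ≤ ν v * 1 :=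
          mul_le_mul_of_nonneg_left (SPI_le_one hp v z) (hν.nn v)
    _ = ν v := mul_one _
  have hs2a : Summable fun v => if v ∈ Finset.Icc 1 M then ν v else 0 :=
    summable_of_ne_finset_zero (s := Finset.Icc 1 M) (fun v hv => by simp [hv])
  have hs2 : Summable fun v => (if v ∈ Finset.Icc 1 M then ν v else 0) + δ * ν v :=
    hs2a.add (hν.summable.mul_left δ)
  calc ∑' v : ℕ, ν v * (∑ w ∈ Finset.Icc 1 z, convPow p v w)
      ≤ ∑' v : ℕ, ((if v ∈ Finset.Icc 1 M then ν v else 0) + δ * ν v) :=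
        Summable.tsum_le_tsum hterm hs1 hs2
  _ = (∑' v : ℕ, (if v ∈ Finset.Icc 1 M then ν v else 0)) + δ * (∑' v : ℕ, ν v) := by
        rw [Summable.tsum_add hs2a (hν.summable.mul_left δ), tsum_mul_left]
  _ = mI ν M + δ := by
        rw [hν.total, mul_one]
        congr 1
        rw [tsum_eq_sum (s := Finset.Icc 1 M) (fun v hv => by simp [hv])]
        exact Finset.sum_congr rfl fun v hv => by simp [hv]

/-- (E4): extinction-mass jump at a step whose letter has `p 0 ≥ c`. -/
lemma ext_jump (hν : Dist ν) (hp : Dist p) {c : ℝ} (hc0 : 0 ≤ c) (hc : c ≤ p 0) (M : ℕ) :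
    ν 0 + c ^ M * mI ν M ≤ evolve ν p 0 := by
  rw [evolve_zero_eval hν hp]
  have hp01 : p 0 ≤ 1 := hp.le_one 0
  have hs : Summable fun v => ν v * (p 0) ^ v := hν.summable_pow (hp.nn 0) hp01
  have h1 : ∑ v ∈ Finset.range (M+1), ν v * (p 0)^v ≤ ∑' v : ℕ, ν v * (p 0)^v :=
    Summable.sum_le_tsum _ (fun v _ => mul_nonneg (hν.nn v) (pow_nonneg (hp.nn 0) v)) hs
  have h2 : ∑ v ∈ Finset.range (M+1), ν v * (p 0)^v
      = ν 0 + ∑ v ∈ Finset.Icc 1 M, ν v * (p 0)^v := by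
    have e0 : ∑ v ∈ Finset.Ico 0 (M+1), ν v * (p 0)^v
        = ν 0 * (p 0)^0 + ∑ v ∈ Finset.Ico (0+1) (M+1), ν v * (p 0)^v :=
      Finset.sum_eq_sum_Ico_succ_bot (Nat.succ_pos M) _
    rw [Finset.range_eq_Ico, e0]
    norm_num [Finset.Ico_add_one_right_eq_Icc]
  have h3 : c ^ M * mI ν M ≤ ∑ v ∈ Finset.Icc 1 M, ν v * (p 0)^v := by
    rw [mI, Finset.mul_sum]
    refine Finset.sum_le_sum fun v hv => ?_
    simp only [Finset.mem_Icc] at hv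
    have hcv : c ^ M ≤ (p 0) ^ v := by
      calc c ^ M ≤ c ^ v := pow_le_pow_of_le_one hc0 (le_trans hc hp01) hv.2
      _ ≤ (p 0:ℝ) ^ v := pow_le_pow_left₀ hc0 hc v
    calc c ^ M * ν v ≤ (p 0)^v * ν v := mul_le_mul_of_nonneg_right hcv (hν.nn v)
    _ = ν v * (p 0)^v := mul_comm _ _
  linarith

/-- (E6): tail bound for the generating function evaluated at `s`. -/
lemma tsum_pow_le (hν : Dist ν) {s : ℝ} (hs0 : 0 ≤ s) (hs1 : s < 1) (z : ℕ) :
    ∑' w : ℕ, ν w * s ^ w ≤ ν 0 + mI ν z + s ^ (z+1) / (1 - s) := by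
  have hsum : Summable fun w => ν w * s ^ w := hν.summable_pow hs0 hs1.le
  have hsplit := (Summable.sum_add_tsum_nat_add (f := fun w => ν w * s ^ w) (z+1) hsum).symm
  rw [hsplit]
  have h1 : ∑ w ∈ Finset.range (z+1), ν w * s ^ w ≤ ν 0 + mI ν z := by
    have e1 : ∑ w ∈ Finset.range (z+1), ν w * s ^ w
        = ν 0 + ∑ w ∈ Finset.Icc 1 z, ν w * s ^ w := by
      have e0 : ∑ w ∈ Finset.Ico 0 (z+1), ν w * s ^ w
          = ν 0 * s ^ 0 + ∑ w ∈ Finset.Ico (0+1) (z+1), ν w * s ^ w :=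
        Finset.sum_eq_sum_Ico_succ_bot (Nat.succ_pos z) _
      rw [Finset.range_eq_Ico, e0]
      norm_num [Finset.Ico_add_one_right_eq_Icc]
    rw [e1]
    have : ∑ w ∈ Finset.Icc 1 z, ν w * s ^ w ≤ mI ν z := by
      rw [mI]
      refine Finset.sum_le_sum fun w _ => ?_
      calc ν w * s ^ w ≤ ν w * 1 :=
            mul_le_mul_of_nonneg_left (pow_le_one₀ hs0 hs1.le) (hν.nn w)
      _ = ν w := mul_one _
    linarith
  have h2 : ∑' (u : ℕ), ν (u + (z+1)) * s ^ (u + (z+1)) ≤ s ^ (z+1) / (1 - s) := by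
    have hgs : Summable fun u : ℕ => s ^ (u + (z+1)) := by
      have : Summable fun u : ℕ => s ^ u := summable_geometric_of_lt_one hs0 hs1
      refine Summable.of_nonneg_of_le (fun u => pow_nonneg hs0 _) (fun u => ?_) this
      rw [pow_add]
      calc s ^ u * s ^ (z+1) ≤ s ^ u * 1 :=
            mul_le_mul_of_nonneg_left (pow_le_one₀ hs0 hs1.le) (pow_nonneg hs0 u)
      _ = s ^ u := mul_one _
    have hterm : ∀ u : ℕ, ν (u + (z+1)) * s ^ (u + (z+1)) ≤ s ^ (u + (z+1)) := by
      intro u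
      calc ν (u + (z+1)) * s ^ (u + (z+1)) ≤ 1 * s ^ (u + (z+1)) :=
            mul_le_mul_of_nonneg_right (hν.le_one _) (pow_nonneg hs0 _)
      _ = s ^ (u + (z+1)) := one_mul _
    have h3 : ∑' (u : ℕ), ν (u + (z+1)) * s ^ (u + (z+1)) ≤ ∑' (u : ℕ), s ^ (u + (z+1)) := by
      refine Summable.tsum_le_tsum hterm ?_ hgs
      exact (summable_nat_add_iff (z+1)).2 hsum
    have h4 : ∑' (u : ℕ), s ^ (u + (z+1)) = s ^ (z+1) / (1 - s) := by
      have : ∀ u : ℕ, s ^ (u + (z+1)) = s ^ (z+1) * s ^ u := by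
        intro u; rw [pow_add]; ring
      rw [tsum_congr this, tsum_mul_left, tsum_geometric_of_lt_one hs0 hs1]
      rw [div_eq_mul_inv]
    linarith [h3, h4.le]
  linarith

lemma nu_zero_le_tsum_pow (hν : Dist ν) {s : ℝ} (hs0 : 0 ≤ s) (hs1 : s ≤ 1) :
    ν 0 ≤ ∑' w : ℕ, ν w * s ^ w := by
  have hsum : Summable fun w => ν w * s ^ w := hν.summable_pow hs0 hs1
  have := Summable.le_tsum hsum 0 (fun w _ => mul_nonneg (hν.nn w) (pow_nonneg hs0 w))
  simpa using this

end LowMass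

/-! ### The sequence of distributions attached to a composition -/

section Main

variable {𝕏 : Type*} {μ : 𝕏 → ℕ → ℝ}

noncomputable def delta1 : ℕ → ℝ := fun w => if w = 1 then 1 else 0

lemma delta1_dist : Dist delta1 := by
  constructor
  · intro m; by_cases h : m = 1 <;> simp [delta1, h]
  · rw [tsum_eq_single 1 (fun w hw => by simp [delta1, hw])]
    simp [delta1]

lemma delta1_pgf (t : ℝ) : ∑' w : ℕ, delta1 w * t ^ w = t := by
  rw [tsum_eq_single 1 (fun w hw => by simp [delta1, hw])]
  simp [delta1]

noncomputable def NU (μ : 𝕏 → ℕ → ℝ) (x : ℕ → 𝕏) (k : ℕ) : ℕ → ℕ → ℝ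
  | 0 => delta1
  | j + 1 => evolve (NU μ x k j) (μ (x (k + 1 + j)))

variable (hG : ∀ i, Good (μ i))
include hG

lemma NU_dist (x : ℕ → 𝕏) (k : ℕ) : ∀ j, Dist (NU μ x k j) := by
  intro j
  induction j with
  | zero => exact delta1_dist
  | succ j ih => exact evolve_dist ih ((hG _).dist)

omit hG

lemma compo_succ (x : ℕ → 𝕏) (a b : ℕ) (h : a ≤ b + 1) (s : ℝ) :
    compo μ x a (b+1) s = compo μ x a b (pgf μ (x (b+1)) s) := by
  have h1 : b + 1 + 1 - a = (b + 1 - a) + 1 := by omega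
  have h2 : a + 1 * (b + 1 - a) = b + 1 := by omega
  rw [compo, h1, List.range'_concat, h2, List.foldr_append]
  rfl

include hG

/-- the bridge between `compo` and the distributions `NU`. -/
lemma bridge (x : ℕ → 𝕏) (k : ℕ) : ∀ j : ℕ, ∀ t : ℝ, 0 ≤ t → t ≤ 1 →
    compo μ x (k+1) (k+j) t = ∑' w : ℕ, NU μ x k j w * t ^ w := by
  intro j
  induction j with
  | zero =>
    intro t ht ht1
    have h0 : k + 1 - (k + 1) = 0 := by omega
    have : compo μ x (k+1) (k+0) t = t := by
      rw [compo]
      have : k + 0 + 1 - (k + 1) = 0 := by omega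
      rw [this]
      rfl
    rw [this, show (NU μ x k 0) = delta1 from rfl]
    exact (delta1_pgf t).symm
  | succ j ih =>
    intro t ht ht1
    have hd : Dist (μ (x (k+1+j))) := (hG _).dist
    have hN : Dist (NU μ x k j) := NU_dist hG x k j
    have e1 : k + (j+1) = (k + j) + 1 := by omega
    have e2 : compo μ x (k+1) (k+(j+1)) t
        = compo μ x (k+1) (k+j) (pgf μ (x (k+j+1)) t) := by
      rw [e1]
      exact compo_succ x (k+1) (k+j) (by omega) t
    have e3 : x (k+j+1) = x (k+1+j) := by congr 1; omega
    rw [e2, e3]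
    have hpg0 : 0 ≤ pg (μ (x (k+1+j))) t := hd.pg_nonneg' ht
    have hpg1 : pg (μ (x (k+1+j))) t ≤ 1 := hd.pg_le_one' ht ht1
    rw [pgf_eq_pg, ih _ hpg0 hpg1]
    have := (evolve_key hN hd ht ht1).2
    rw [← this]
    rfl

omit hG

/-- small nonzero extinction probabilities: a positive uniform lower bound -/
lemma exists_cmin [Fintype 𝕏] (hne : ∃ i : 𝕏, 0 < μ i 0) :
    ∃ c : ℝ, 0 < c ∧ ∀ i : 𝕏, 0 < μ i 0 → c ≤ μ i 0 := by
  classical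
  obtain ⟨i₀, hi₀⟩ := hne
  set S := (Finset.univ.filter fun i : 𝕏 => 0 < μ i 0).image fun i => μ i 0 with hS
  have hSne : S.Nonempty := ⟨μ i₀ 0, by
    simp only [hS, Finset.mem_image]
    exact ⟨i₀, by simp [hi₀], rfl⟩⟩
  refine ⟨S.min' hSne, ?_, ?_⟩
  · have := S.min'_mem hSne
    simp only [hS, Finset.mem_image, Finset.mem_filter] at this
    obtain ⟨i, ⟨_, hi⟩, he⟩ := this
    rw [← he]; exact hi
  · intro i hi
    refine S.min'_le _ ?_
    simp only [hS, Finset.mem_image, Finset.mem_filter]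
    exact ⟨i, by simp [hi], rfl⟩

lemma Good.p0_lt_one {p : ℕ → ℝ} (h : Good p) : p 0 < 1 := by
  obtain ⟨m₀, hm₀, hp₀⟩ := h.exists_pos
  have hsum2 : p 0 + p m₀ ≤ 1 := by
    have h1 : ∑ m ∈ ({0, m₀} : Finset ℕ), p m ≤ 1 := by
      have := Summable.sum_le_tsum ({0, m₀} : Finset ℕ) (fun m _ => h.nn m) h.summable
      rwa [h.total] at this
    rwa [Finset.sum_pair (by omega)] at h1
  linarith

include hG

lemma exists_pmax [Fintype 𝕏] [Nonempty 𝕏] :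
    ∃ r : ℝ, 0 ≤ r ∧ r < 1 ∧ ∀ i : 𝕏, μ i 0 ≤ r := by
  classical
  set S := Finset.univ.image fun i : 𝕏 => μ i 0 with hS
  have hSne : S.Nonempty := by
    obtain ⟨i⟩ := (inferInstance : Nonempty 𝕏)
    exact ⟨μ i 0, by simp [hS]⟩
  refine ⟨S.max' hSne, ?_, ?_, ?_⟩
  · have := S.max'_mem hSne
    simp only [hS, Finset.mem_image] at this
    obtain ⟨i, _, he⟩ := this
    rw [← he]; exact (hG i).nn 0
  · have := S.max'_mem hSne
    simp only [hS, Finset.mem_image] at this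
    obtain ⟨i, _, he⟩ := this
    rw [← he]; exact (hG i).p0_lt_one
  · intro i
    refine S.le_max' _ ?_
    simp [hS]

omit hG

/-- the crash bound is eventually small -/
lemma crash_small {r : ℝ} (hr0 : 0 ≤ r) (hr1 : r < 1) (z : ℕ) {ε : ℝ} (hε : 0 < ε) :
    ∃ M : ℕ, z ≤ M ∧ ∀ v : ℕ, M < v → ((z:ℝ)+1) * (v:ℝ)^z * r^(v-z) ≤ ε := by
  set g : ℕ → ℝ := fun u => ((z:ℝ)+1) * ((u+z : ℕ):ℝ)^z * r^u with hg
  have hgs : Summable g := by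
    have hterm : ∀ u : ℕ, g u
        = ∑ i ∈ Finset.range (z+1), (((z:ℝ)+1) * ((z:ℝ)^(z-i) * (z.choose i)) * ((u:ℝ)^i * r^u)) := by
      intro u
      rw [hg]
      simp only
      rw [show ((u+z : ℕ):ℝ) = (u:ℝ) + (z:ℝ) by push_cast; ring, add_pow]
      rw [Finset.mul_sum, Finset.sum_mul]
      refine Finset.sum_congr rfl fun i _ => by ring
    refine Summable.congr ?_ fun u => (hterm u).symm
    refine summable_sum fun i _ => ?_
    refine Summable.mul_left _ ?_
    have := summable_pow_mul_geometric_of_norm_lt_one (R := ℝ) i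
      (r := r) (by rwa [Real.norm_eq_abs, abs_of_nonneg hr0])
    exact this
  have hg0 := hgs.tendsto_atTop_zero
  rw [Metric.tendsto_atTop] at hg0
  obtain ⟨N, hN⟩ := hg0 ε hε
  refine ⟨N + z, by omega, ?_⟩
  intro v hv
  have hu : N ≤ v - z := by omega
  have hvz : v - z + z = v := by omega
  have := hN (v - z) hu
  rw [Real.dist_eq, sub_zero] at this
  have hgnn : 0 ≤ g (v - z) := by
    rw [hg]
    have : (0:ℝ) ≤ ((z:ℝ)+1) := by positivity
    positivity
  have habs : g (v - z) ≤ ε := by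
    rw [abs_of_nonneg hgnn] at this
    linarith
  calc ((z:ℝ)+1) * (v:ℝ)^z * r^(v-z) = g (v - z) := by rw [hg]; simp only [hvz]
  _ ≤ ε := habs

end Main

/-! ### convergence of the compositions -/

section Cases

variable {𝕏 : Type*} {μ : 𝕏 → ℕ → ℝ}

lemma pg_mono_good {p : ℕ → ℝ} (h : Good p) {t t' : ℝ} (ht : 0 ≤ t) (htt : t ≤ t')
    (ht1 : t' ≤ 1) : pg p t ≤ pg p t' :=
  Summable.tsum_le_tsum
    (fun m => mul_le_mul_of_nonneg_left (pow_le_pow_left₀ ht htt m) (h.nn m))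
    (h.summable_pow ht (le_trans htt ht1)) (h.summable_pow (le_trans ht htt) ht1)

lemma pg_le_id {p : ℕ → ℝ} (h : Good p) (hp0 : p 0 = 0) {t : ℝ} (ht : 0 ≤ t)
    (ht1 : t ≤ 1) : pg p t ≤ t := by
  have h1 : ∀ m : ℕ, p m * t ^ m ≤ p m * t := by
    intro m
    rcases Nat.eq_zero_or_pos m with h0 | h0
    · rw [h0]; simp [hp0]
    · calc p m * t ^ m ≤ p m * t ^ 1 :=
          mul_le_mul_of_nonneg_left (pow_le_pow_of_le_one ht ht1 h0) (h.nn m)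
      _ = p m * t := by rw [pow_one]
  calc pg p t ≤ ∑' m : ℕ, p m * t :=
        Summable.tsum_le_tsum h1 (h.summable_pow ht ht1) (h.summable.mul_right t)
  _ = t := by rw [tsum_mul_right, h.total, one_mul]

variable (hG : ∀ i, Good (μ i))
include hG

lemma foldr_mem01 (x : ℕ → 𝕏) (l : List ℕ) {t : ℝ} (ht : 0 ≤ t) (ht1 : t ≤ 1) :
    0 ≤ l.foldr (fun c u => pgf μ (x c) u) t ∧ l.foldr (fun c u => pgf μ (x c) u) t ≤ 1 := by
  induction l with
  | nil => exact ⟨ht, ht1⟩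
  | cons c l ih =>
    simp only [List.foldr_cons]
    exact ⟨(hG (x c)).pg_nonneg ih.1, (hG (x c)).pg_le_one ih.1 ih.2⟩

lemma foldr_mono (x : ℕ → 𝕏) (l : List ℕ) {t t' : ℝ} (ht : 0 ≤ t) (htt : t ≤ t')
    (ht1 : t' ≤ 1) :
    l.foldr (fun c u => pgf μ (x c) u) t ≤ l.foldr (fun c u => pgf μ (x c) u) t' := by
  induction l with
  | nil => exact htt
  | cons c l ih =>
    simp only [List.foldr_cons]
    exact pg_mono_good (hG (x c)) (foldr_mem01 hG x l ht (le_trans htt ht1)).1 ih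
      (foldr_mem01 hG x l (le_trans ht htt) ht1).2

lemma compo_mono (x : ℕ → 𝕏) (a b : ℕ) {t t' : ℝ} (ht : 0 ≤ t) (htt : t ≤ t')
    (ht1 : t' ≤ 1) : compo μ x a b t ≤ compo μ x a b t' :=
  foldr_mono hG x _ ht htt ht1

lemma compo_mem01 (x : ℕ → 𝕏) (a b : ℕ) {t : ℝ} (ht : 0 ≤ t) (ht1 : t ≤ 1) :
    0 ≤ compo μ x a b t ∧ compo μ x a b t ≤ 1 :=
  foldr_mem01 hG x _ ht ht1

/-- Case 1: only finitely many letters have positive extinction mass. -/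
lemma case_fin (x : ℕ → 𝕏) (k : ℕ) {s : ℝ} (hs0 : 0 ≤ s) (hs1 : s < 1) (N : ℕ)
    (hzero : ∀ j, N ≤ j → μ (x (k+1+j)) 0 = 0) :
    ∃ u : ℝ, 0 ≤ u ∧ u ≤ 1 ∧
      Tendsto (fun j => compo μ x (k+1) (k+j) s) atTop (𝓝 u) := by
  set U : ℕ → ℝ := fun j => compo μ x (k+1) (k+j) s with hU
  have hU01 : ∀ j, 0 ≤ U j ∧ U j ≤ 1 := fun j => compo_mem01 hG x _ _ hs0 hs1.le
  have hstep : ∀ j, N ≤ j → U (j+1) ≤ U j := by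
    intro j hj
    have e1 : k + (j+1) = (k + j) + 1 := by omega
    have e2 : U (j+1) = compo μ x (k+1) (k+j) (pgf μ (x (k+j+1)) s) := by
      rw [hU]
      simp only
      rw [e1]
      exact compo_succ x (k+1) (k+j) (by omega) s
    have e3 : x (k+j+1) = x (k+1+j) := by congr 1; omega
    have hple : pgf μ (x (k+j+1)) s ≤ s := by
      rw [e3, pgf_eq_pg]
      exact pg_le_id (hG _) (hzero j hj) hs0 hs1.le
    have hp0 : 0 ≤ pgf μ (x (k+j+1)) s := (hG _).pg_nonneg hs0
    rw [e2]
    exact compo_mono hG x (k+1) (k+j) hp0 hple hs1.le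
  set V : ℕ → ℝ := fun j => U (j + N) with hV
  have hVanti : Antitone V := by
    refine antitone_nat_of_succ_le fun j => ?_
    have h1 := hstep (j + N) (by omega)
    have e : j + 1 + N = (j + N) + 1 := by omega
    rw [hV]
    simp only
    rw [e]
    exact h1
  have hVbdd : BddBelow (Set.range V) := by
    refine ⟨0, fun y hy => ?_⟩
    obtain ⟨j, rfl⟩ := hy
    exact (hU01 _).1
  have hVt := tendsto_atTop_ciInf hVanti hVbdd
  refine ⟨⨅ j, V j, ?_, ?_, ?_⟩
  · exact le_ciInf fun j => (hU01 _).1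
  · exact le_trans (ciInf_le hVbdd 0) (hU01 _).2
  · exact (tendsto_add_atTop_iff_nat N).1 hVt

/-- Case 2: infinitely many letters have positive extinction mass. -/
lemma case_inf [Fintype 𝕏] [Nonempty 𝕏] (x : ℕ → 𝕏) (k : ℕ) {s : ℝ}
    (hs0 : 0 ≤ s) (hs1 : s < 1)
    (hinf : ∀ N, ∃ j, N ≤ j ∧ 0 < μ (x (k+1+j)) 0) :
    ∃ u : ℝ, 0 ≤ u ∧ u ≤ 1 ∧
      Tendsto (fun j => compo μ x (k+1) (k+j) s) atTop (𝓝 u) := by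
  classical
  set Q : ℕ → ℝ := fun j => NU μ x k j 0 with hQ
  have hNd : ∀ j, Dist (NU μ x k j) := NU_dist hG x k
  have hQmono : Monotone Q :=
    monotone_nat_of_le_succ fun j => evolve_zero_ge (hNd j) ((hG _).dist)
  have hQ01 : ∀ j, 0 ≤ Q j ∧ Q j ≤ 1 := fun j => ⟨(hNd j).nn 0, (hNd j).le_one 0⟩
  have hQbdd : BddAbove (Set.range Q) := by
    refine ⟨1, fun y hy => ?_⟩
    obtain ⟨j, rfl⟩ := hy
    exact (hQ01 j).2
  have hQt : Tendsto Q atTop (𝓝 (⨆ j, Q j)) := tendsto_atTop_ciSup hQmono hQbdd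
  set qh := ⨆ j, Q j with hqh
  have hqh_le : ∀ j, Q j ≤ qh := fun j => le_ciSup hQbdd j
  have hqh0 : 0 ≤ qh := le_trans (hQ01 0).1 (hqh_le 0)
  have hqh1 : qh ≤ 1 := ciSup_le fun j => (hQ01 j).2
  set U : ℕ → ℝ := fun j => compo μ x (k+1) (k+j) s with hU
  have hUeq : ∀ j, U j = ∑' w : ℕ, NU μ x k j w * s ^ w := fun j =>
    bridge hG x k j s hs0 hs1.le
  have hUQ : ∀ j, Q j ≤ U j := fun j => by
    rw [hUeq j]; exact nu_zero_le_tsum_pow (hNd j) hs0 hs1.le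
  have main : ∀ ε : ℝ, 0 < ε → ∃ P, ∀ j, P ≤ j → U j - Q j ≤ ε := by
    intro ε hε
    have hε3pos : 0 < ε / 3 := by positivity
    obtain ⟨z, hz⟩ : ∃ z : ℕ, s ^ (z+1) / (1 - s) ≤ ε / 3 := by
      have h1s : 0 < 1 - s := by linarith
      have htp := tendsto_pow_atTop_nhds_zero_of_lt_one hs0 hs1
      rw [Metric.tendsto_atTop] at htp
      obtain ⟨N, hN⟩ := htp (ε / 3 * (1 - s)) (by positivity)
      refine ⟨N, ?_⟩
      have h2 := hN (N+1) (by omega)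
      rw [Real.dist_eq, sub_zero, abs_of_nonneg (pow_nonneg hs0 _)] at h2
      rw [div_le_iff₀ h1s]
      linarith
    obtain ⟨c, hc0, hcle⟩ := exists_cmin (𝕏 := 𝕏) (μ := μ)
      (by obtain ⟨j, _, hj⟩ := hinf 0; exact ⟨x (k+1+j), hj⟩)
    obtain ⟨r, hr0, hr1, hrle⟩ := exists_pmax hG
    obtain ⟨M, hMz, hM⟩ := crash_small hr0 hr1 z hε3pos
    have hcM : 0 < c ^ M := pow_pos hc0 M
    obtain ⟨N₀, hN₀⟩ : ∃ N₀, ∀ j, N₀ ≤ j → qh - Q j ≤ ε / 3 * c ^ M := by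
      rw [Metric.tendsto_atTop] at hQt
      obtain ⟨N₀, hN₀⟩ := hQt (ε / 3 * c ^ M) (by positivity)
      refine ⟨N₀, fun j hj => ?_⟩
      have h2 := hN₀ j hj
      rw [Real.dist_eq] at h2
      have h3 := hqh_le j
      rw [abs_of_nonpos (by linarith)] at h2
      linarith
    obtain ⟨j₀, hj₀N, hj₀pos⟩ := hinf N₀
    refine ⟨j₀ + 1, fun j hj => ?_⟩
    set Pr : ℕ → Prop := fun a => 0 < μ (x (k+1+a)) 0 with hPr
    set T := Nat.findGreatest Pr (j-1) with hT
    have hj₀le : j₀ ≤ j - 1 := by omega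
    have hTpos : Pr T := Nat.findGreatest_spec hj₀le hj₀pos
    have hTge : N₀ ≤ T := le_trans hj₀N (Nat.le_findGreatest hj₀le hj₀pos)
    have hTle : T ≤ j - 1 := Nat.findGreatest_le (j-1)
    have hnolet : ∀ a, T < a → a ≤ j - 1 → μ (x (k+1+a)) 0 = 0 := by
      intro a h1 h2
      have h3 := Nat.findGreatest_is_greatest (P := Pr) (h1.trans_le (le_refl a)) h2
      have hnn := (hG (x (k+1+a))).nn 0
      rw [hPr] at h3
      push_neg at h3
      linarith
    have hchain : ∀ b, T + 1 ≤ b → b ≤ j → mI (NU μ x k b) z ≤ mI (NU μ x k (T+1)) z := by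
      intro b hb1
      induction b, hb1 using Nat.le_induction with
      | base => intro _; exact le_refl _
      | succ b hb ih =>
        intro hbj
        have hstep : mI (NU μ x k (b+1)) z ≤ mI (NU μ x k b) z := by
          have hrfl : NU μ x k (b+1) = evolve (NU μ x k b) (μ (x (k+1+b))) := rfl
          rw [hrfl]
          exact mI_step_noext (hNd b) ((hG _).dist) (hnolet b (by omega) (by omega)) z
        exact le_trans hstep (ih (by omega))
    have hcrash : ∀ v : ℕ, M < v →
        ∑ w ∈ Finset.Icc 1 z, convPow (μ (x (k+1+T))) v w ≤ ε / 3 := by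
      intro v hv
      have h1 : ∑ w ∈ Finset.Icc 1 z, convPow (μ (x (k+1+T))) v w
          ≤ SP (μ (x (k+1+T))) v z := SPI_le_SP ((hG _).nn) v z
      have h2 := SP_crash (p := μ (x (k+1+T))) ((hG (x (k+1+T))).dist) v z (by omega)
      have h3 : ((μ (x (k+1+T))) 0)^(v-z) ≤ r^(v-z) :=
        pow_le_pow_left₀ ((hG _).nn 0) (hrle _) _
      have h4 : ((z:ℝ)+1) * (v:ℝ)^z * ((μ (x (k+1+T))) 0)^(v-z)
          ≤ ((z:ℝ)+1) * (v:ℝ)^z * r^(v-z) := by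
        refine mul_le_mul_of_nonneg_left h3 ?_
        positivity
      have h5 := hM v hv
      calc ∑ w ∈ Finset.Icc 1 z, convPow (μ (x (k+1+T))) v w
          ≤ SP (μ (x (k+1+T))) v z := h1
        _ ≤ ((z:ℝ)+1) * (v:ℝ)^z * ((μ (x (k+1+T))) 0)^(v-z) := h2
        _ ≤ ((z:ℝ)+1) * (v:ℝ)^z * r^(v-z) := h4
        _ ≤ ε / 3 := h5
    have hsplit : mI (NU μ x k (T+1)) z ≤ mI (NU μ x k T) M + ε / 3 := by
      have hrfl : NU μ x k (T+1) = evolve (NU μ x k T) (μ (x (k+1+T))) := rfl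
      rw [hrfl]
      exact mI_step_split (hNd T) ((hG _).dist) hε3pos.le hcrash
    have hjump : mI (NU μ x k T) M ≤ ε / 3 := by
      have h1 := ext_jump (hNd T) ((hG _).dist) hc0.le (hcle _ hTpos) M
      have h2 : evolve (NU μ x k T) (μ (x (k+1+T))) 0 = Q (T+1) := rfl
      rw [h2] at h1
      have h3 : Q (T+1) ≤ qh := hqh_le (T+1)
      have h4 := hN₀ T hTge
      have h5 : c ^ M * mI (NU μ x k T) M ≤ c ^ M * (ε / 3) := by
        have hQT : NU μ x k T 0 = Q T := rfl
        rw [hQT] at h1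
        nlinarith
      exact le_of_mul_le_mul_left h5 hcM
    have hfinal : mI (NU μ x k j) z ≤ 2 * (ε / 3) := by
      have h1 := hchain j (by omega) (le_refl j)
      linarith
    have htail := tsum_pow_le (hNd j) hs0 hs1 z
    rw [← hUeq j] at htail
    have hQj : NU μ x k j 0 = Q j := rfl
    rw [hQj] at htail
    linarith
  have hdiff : Tendsto (fun j => U j - Q j) atTop (𝓝 0) := by
    rw [Metric.tendsto_atTop]
    intro ε hε
    obtain ⟨P, hP⟩ := main (ε/2) (by positivity)
    refine ⟨P, fun j hj => ?_⟩
    rw [Real.dist_eq, sub_zero, abs_of_nonneg (by linarith [hUQ j])]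
    have := hP j hj
    linarith
  refine ⟨qh, hqh0, hqh1, ?_⟩
  have hadd := hQt.add hdiff
  rw [add_zero] at hadd
  exact hadd.congr fun j => by ring

/-- combination: the compositions always converge. -/
lemma compo_tendsto [Fintype 𝕏] [Nonempty 𝕏] (x : ℕ → 𝕏) (k : ℕ) {s : ℝ}
    (hs0 : 0 ≤ s) (hs1 : s < 1) :
    ∃ u : ℝ, 0 ≤ u ∧ u ≤ 1 ∧
      Tendsto (fun j => compo μ x (k+1) (k+j) s) atTop (𝓝 u) := by
  by_cases hcase : ∀ N, ∃ j, N ≤ j ∧ 0 < μ (x (k+1+j)) 0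
  · exact case_inf hG x k hs0 hs1 hcase
  · push_neg at hcase
    obtain ⟨N, hN⟩ := hcase
    refine case_fin hG x k hs0 hs1 N fun j hj => ?_
    have h1 := hN j hj
    have h2 := (hG (x (k+1+j))).nn 0
    linarith

end Cases

/-! ### continuity of the auxiliary functions and the main theorem -/

section Limit

variable {𝕏 : Type*} {μ : 𝕏 → ℕ → ℝ}

lemma gS_continuous (j : ℕ) : Continuous fun t : ℝ => gS t j :=
  continuous_finset_sum _ fun i _ => continuous_pow i

lemma aS_continuous (m : ℕ) : Continuous fun t : ℝ => aS t m :=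
  continuous_finset_sum _ fun j _ => gS_continuous j

lemma hf_tendsto {p : ℕ → ℝ} (h : Good p) {u : ℕ → ℝ} {l : ℝ}
    (hu : ∀ n, 0 ≤ u n ∧ u n ≤ 1) (hl : Tendsto u atTop (𝓝 l)) :
    Tendsto (fun n => hf p (u n)) atTop (𝓝 (hf p l)) := by
  refine tendsto_tsum_of_dominated_convergence (bound := fun m : ℕ => (m:ℝ) * p m) h.sm
    (fun m => ?_) ?_
  · exact (((gS_continuous m).tendsto l).comp hl).const_mul (p m)
  · refine Filter.Eventually.of_forall fun n m => ?_
    rw [Real.norm_eq_abs, abs_of_nonneg (mul_nonneg (h.nn m) (gS_nonneg (hu n).1 m))]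
    calc p m * gS (u n) m ≤ p m * m :=
          mul_le_mul_of_nonneg_left (gS_le (hu n).1 (hu n).2 m) (h.nn m)
    _ = (m:ℝ) * p m := mul_comm _ _

lemma af_tendsto {p : ℕ → ℝ} (h : Good p) {u : ℕ → ℝ} {l : ℝ}
    (hu : ∀ n, 0 ≤ u n ∧ u n ≤ 1) (hl : Tendsto u atTop (𝓝 l)) :
    Tendsto (fun n => af p (u n)) atTop (𝓝 (af p l)) := by
  refine tendsto_tsum_of_dominated_convergence (bound := fun m : ℕ => (m:ℝ)^2 * p m) h.ssq
    (fun m => ?_) ?_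
  · exact (((aS_continuous m).tendsto l).comp hl).const_mul (p m)
  · refine Filter.Eventually.of_forall fun n m => ?_
    rw [Real.norm_eq_abs, abs_of_nonneg (mul_nonneg (h.nn m) (aS_nonneg (hu n).1 m))]
    calc p m * aS (u n) m ≤ p m * (m:ℝ)^2 :=
          mul_le_mul_of_nonneg_left (aS_le (hu n).1 (hu n).2 m) (h.nn m)
    _ = (m:ℝ)^2 * p m := mul_comm _ _

lemma Good.ratio_le {p : ℕ → ℝ} (h : Good p) {t : ℝ} (ht : 0 ≤ t) (ht1 : t ≤ 1) :
    af p t / (hf p t * mean p) ≤ fm2 p / (mean p)^2 := by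
  have h1 := h.hf_pos ht ht1
  have h2 : 0 < mean p := h.mpos
  have hk := h.key_ineq ht ht1
  rw [div_le_div_iff₀ (by positivity) (by positivity)]
  nlinarith [mul_le_mul_of_nonneg_right hk h2.le]

theorem remainder_terms_bound_and_limit'
    [Fintype 𝕏] [Nonempty 𝕏]
    (hnonneg : ∀ i m, 0 ≤ μ i m)
    (hsum : ∀ i, ∑' m : ℕ, μ i m = 1)
    (hmean_summable : ∀ i, Summable (fun m : ℕ => (m : ℝ) * μ i m))
    (hsq_summable : ∀ i, Summable (fun m : ℕ => (m : ℝ) ^ 2 * μ i m))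
    (hmean_pos : ∀ i, 0 < offMean μ i) :
    (∀ n : ℕ, 2 ≤ n → ∀ (x : ℕ → 𝕏) (s : ℝ), s ∈ Set.Ico (0 : ℝ) 1 →
      gfun μ (x 1) (compo μ x 2 n s) ∈ Set.Icc 0 (eta μ)) ∧
    (∀ (x : ℕ → 𝕏) (s : ℝ), s ∈ Set.Ico (0 : ℝ) 1 → ∀ k : ℕ, 1 ≤ k →
      ∃ L ∈ Set.Icc 0 (eta μ),
        Tendsto (fun n : ℕ => gfun μ (x k) (compo μ x (k + 1) n s)) atTop (𝓝 L)) := by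
  have hG : ∀ i, Good (μ i) := fun i =>
    ⟨hnonneg i, hsum i, hmean_summable i, hsq_summable i, hmean_pos i⟩
  constructor
  · intro n _ x s hs
    obtain ⟨hs0, hs1⟩ := hs
    obtain ⟨h1, h2⟩ := compo_mem hG x 2 n hs0 hs1
    exact gfun_mem_Icc_eta hG (x 1) h1 h2
  · intro x s hs k _
    obtain ⟨hs0, hs1⟩ := hs
    obtain ⟨u, hu0, hu1, hut⟩ := compo_tendsto hG x k hs0 hs1
    set q : ℕ → ℝ := μ (x k) with hq
    have hGq : Good q := hG (x k)
    refine ⟨af q u / (hf q u * mean q), ⟨?_, ?_⟩, ?_⟩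
    · have h1 := hGq.hf_pos hu0 hu1
      have h2 : 0 < mean q := hGq.mpos
      have h3 := hGq.af_nonneg hu0
      positivity
    · exact le_trans (hGq.ratio_le hu0 hu1) (ratio_le_eta (x k))
    · -- convergence
      have htn : Tendsto (fun n : ℕ => compo μ x (k+1) n s) atTop (𝓝 u) := by
        have hcomp : Tendsto (fun n : ℕ => compo μ x (k+1) (k + (n - k)) s) atTop (𝓝 u) :=
          hut.comp (tendsto_sub_atTop_nat k)
        refine hcomp.congr' ?_
        filter_upwards [eventually_ge_atTop k] with n hn
        have : k + (n - k) = n := by omega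
        rw [this]
      set t : ℕ → ℝ := fun n => compo μ x (k+1) n s with htd
      have htb : ∀ n, 0 ≤ t n ∧ t n < 1 := fun n => compo_mem hG x (k+1) n hs0 hs1
      have htb' : ∀ n, 0 ≤ t n ∧ t n ≤ 1 := fun n => ⟨(htb n).1, (htb n).2.le⟩
      have haf := af_tendsto hGq htb' htn
      have hhf := hf_tendsto hGq htb' htn
      have hne : hf q u * mean q ≠ 0 := by
        have h1 := hGq.hf_pos hu0 hu1
        have h2 : 0 < mean q := hGq.mpos
        positivity
      have hfrac := haf.div (hhf.mul_const (mean q)) hne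
      refine hfrac.congr fun n => ?_
      exact ((hGq.gf_eq (htb n).1 (htb n).2).symm : af q (t n) / (hf q (t n) * mean q) = gf q (t n))

end Limit

theorem remainder_terms_bound_and_limit
    {𝕏 : Type*} [Fintype 𝕏] [Nonempty 𝕏]
    (μ : 𝕏 → ℕ → ℝ)
    (hnonneg : ∀ i m, 0 ≤ μ i m)
    (hsum : ∀ i, ∑' m : ℕ, μ i m = 1)
    (hmean_summable : ∀ i, Summable (fun m : ℕ => (m : ℝ) * μ i m))
    (hsq_summable : ∀ i, Summable (fun m : ℕ => (m : ℝ) ^ 2 * μ i m))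
    (hmean_pos : ∀ i, 0 < offMean μ i) :
    (∀ n : ℕ, 2 ≤ n → ∀ (x : ℕ → 𝕏) (s : ℝ), s ∈ Set.Ico (0 : ℝ) 1 →
      gfun μ (x 1) (compo μ x 2 n s) ∈ Set.Icc 0 (eta μ)) ∧
    (∀ (x : ℕ → 𝕏) (s : ℝ), s ∈ Set.Ico (0 : ℝ) 1 → ∀ k : ℕ, 1 ≤ k →
      ∃ L ∈ Set.Icc 0 (eta μ),
        Tendsto (fun n : ℕ => gfun μ (x k) (compo μ x (k + 1) n s)) atTop (𝓝 L)) := by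
  exact remainder_terms_bound_and_limit' hnonneg hsum hmean_summable hsq_summable hmean_pos

end Stmt7
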